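/- arXiv:1403.5652 — 9 statements merged into one kernel-verified Lean document; each statement's English description precedes it below -/
import Mathlib

section
/- Let A, B, C be affinely independent points in ℝ². For λ, μ, ν > 0, let L divide segment BC in ratio λ:1 (i.e., L = (B + λC)/(1+λ)), M divide CA in ratio μ:1, and N divide AB in ratio ν:1. Then the cevians AL, BM, CN pairwise intersect, and the triangle formed by their three pairwise intersection points has area equal to (λμν − 1)² / ((λμ + λ + 1)(μν + μ + 1)(νλ + ν + 1)) times the area of triangle ABC. -/
set_option maxHeartbeats 1000000


/-- det of two vectors in ℝ². -/
def detv (u v : ℝ × ℝ) : ℝ := u.1 * v.2 - u.2 * v.1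

/-- Area of a triangle in ℝ². -/
noncomputable def area3 (P Q R : ℝ × ℝ) : ℝ := |detv (Q - P) (R - P)| / 2

/-- The line through two points of ℝ². -/
def lineTh (P Q : ℝ × ℝ) : Set (ℝ × ℝ) := {X | ∃ t : ℝ, X = P + t • (Q - P)}

lemma detv_smul_left (r : ℝ) (u v : ℝ × ℝ) : detv (r • u) v = r * detv u v := by
  simp only [detv, Prod.smul_fst, Prod.smul_snd, smul_eq_mul]; ring

lemma detv_self (v : ℝ × ℝ) : detv v v = 0 := by simp only [detv]; ring

lemma line_inter_unique {A L B M P P' : ℝ × ℝ} (h : detv (L - A) (M - B) ≠ 0)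
    (hP : P ∈ lineTh A L ∩ lineTh B M) (hP' : P' ∈ lineTh A L ∩ lineTh B M) :
    P = P' := by
  obtain ⟨⟨t, ht⟩, ⟨s, hs⟩⟩ := hP
  obtain ⟨⟨t', ht'⟩, ⟨s', hs'⟩⟩ := hP'
  have h1 : P - P' = (t - t') • (L - A) := by rw [ht, ht', sub_smul]; abel
  have h2 : P - P' = (s - s') • (M - B) := by rw [hs, hs', sub_smul]; abel
  have h3 : (t - t') * detv (L - A) (M - B) = 0 := by
    rw [← detv_smul_left, ← h1, h2, detv_smul_left, detv_self, mul_zero]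
  have htt : t = t' := by
    have := (mul_eq_zero.mp h3).resolve_right h
    linarith
  rw [ht, ht', htt]

/-- Routh–Steiner theorem. -/
theorem routh_steiner (A B C : ℝ × ℝ) (hABC : detv (B - A) (C - A) ≠ 0)
    (l m n : ℝ) (hl : 0 < l) (hm : 0 < m) (hn : 0 < n) (L M N : ℝ × ℝ)
    (hL : L = (1 / (1 + l)) • B + (l / (1 + l)) • C)
    (hM : M = (1 / (1 + m)) • C + (m / (1 + m)) • A)
    (hN : N = (1 / (1 + n)) • A + (n / (1 + n)) • B) :
    (∃ P, P ∈ lineTh A L ∩ lineTh B M) ∧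
    (∃ Q, Q ∈ lineTh B M ∩ lineTh C N) ∧
    (∃ R, R ∈ lineTh C N ∩ lineTh A L) ∧
    ∀ P Q R : ℝ × ℝ,
      P ∈ lineTh A L ∩ lineTh B M →
      Q ∈ lineTh B M ∩ lineTh C N →
      R ∈ lineTh C N ∩ lineTh A L →
      area3 P Q R =
        (l * m * n - 1) ^ 2 /
          ((l * m + l + 1) * (m * n + m + 1) * (n * l + n + 1)) * area3 A B C := by
  subst hL hM hN
  have h1l : (1:ℝ) + l ≠ 0 := by positivity
  have h1m : (1:ℝ) + m ≠ 0 := by positivity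
  have h1n : (1:ℝ) + n ≠ 0 := by positivity
  have hα : l * m + l + 1 ≠ 0 := by positivity
  have hβ : m * n + m + 1 ≠ 0 := by positivity
  have hγ : n * l + n + 1 ≠ 0 := by positivity
  obtain ⟨P0, hP0⟩ : ∃ P0 : ℝ × ℝ, P0 = (l * m + l + 1)⁻¹ • ((l * m) • A + B + l • C) := ⟨_, rfl⟩
  obtain ⟨Q0, hQ0⟩ : ∃ Q0 : ℝ × ℝ, Q0 = (m * n + m + 1)⁻¹ • (m • A + (m * n) • B + C) := ⟨_, rfl⟩
  obtain ⟨R0, hR0⟩ : ∃ R0 : ℝ × ℝ, R0 = (n * l + n + 1)⁻¹ • (A + n • B + (n * l) • C) := ⟨_, rfl⟩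
  have hPAL : P0 ∈ lineTh A ((1 / (1 + l)) • B + (l / (1 + l)) • C) := by
    refine ⟨(1 + l) / (l * m + l + 1), ?_⟩
    rw [Prod.ext_iff]
    constructor <;>
    · simp only [hP0, Prod.smul_fst, Prod.smul_snd, Prod.fst_add, Prod.snd_add,
        Prod.fst_sub, Prod.snd_sub, smul_eq_mul]
      field_simp
      ring
  have hPBM : P0 ∈ lineTh B ((1 / (1 + m)) • C + (m / (1 + m)) • A) := by
    refine ⟨l * (1 + m) / (l * m + l + 1), ?_⟩
    rw [Prod.ext_iff]
    constructor <;>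
    · simp only [hP0, Prod.smul_fst, Prod.smul_snd, Prod.fst_add, Prod.snd_add,
        Prod.fst_sub, Prod.snd_sub, smul_eq_mul]
      field_simp
      ring
  have hQBM : Q0 ∈ lineTh B ((1 / (1 + m)) • C + (m / (1 + m)) • A) := by
    refine ⟨(1 + m) / (m * n + m + 1), ?_⟩
    rw [Prod.ext_iff]
    constructor <;>
    · simp only [hQ0, Prod.smul_fst, Prod.smul_snd, Prod.fst_add, Prod.snd_add,
        Prod.fst_sub, Prod.snd_sub, smul_eq_mul]
      field_simp
      ring
  have hQCN : Q0 ∈ lineTh C ((1 / (1 + n)) • A + (n / (1 + n)) • B) := by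
    refine ⟨m * (1 + n) / (m * n + m + 1), ?_⟩
    rw [Prod.ext_iff]
    constructor <;>
    · simp only [hQ0, Prod.smul_fst, Prod.smul_snd, Prod.fst_add, Prod.snd_add,
        Prod.fst_sub, Prod.snd_sub, smul_eq_mul]
      field_simp
      ring
  have hRCN : R0 ∈ lineTh C ((1 / (1 + n)) • A + (n / (1 + n)) • B) := by
    refine ⟨(1 + n) / (n * l + n + 1), ?_⟩
    rw [Prod.ext_iff]
    constructor <;>
    · simp only [hR0, Prod.smul_fst, Prod.smul_snd, Prod.fst_add, Prod.snd_add,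
        Prod.fst_sub, Prod.snd_sub, smul_eq_mul]
      field_simp
      ring
  have hRAL : R0 ∈ lineTh A ((1 / (1 + l)) • B + (l / (1 + l)) • C) := by
    refine ⟨n * (1 + l) / (n * l + n + 1), ?_⟩
    rw [Prod.ext_iff]
    constructor <;>
    · simp only [hR0, Prod.smul_fst, Prod.smul_snd, Prod.fst_add, Prod.snd_add,
        Prod.fst_sub, Prod.snd_sub, smul_eq_mul]
      field_simp
      ring
  have hdet1 : detv ((1 / (1 + l)) • B + (l / (1 + l)) • C - A)
      ((1 / (1 + m)) • C + (m / (1 + m)) • A - B) ≠ 0 := by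
    have heq : detv ((1 / (1 + l)) • B + (l / (1 + l)) • C - A)
        ((1 / (1 + m)) • C + (m / (1 + m)) • A - B)
        = (l * m + l + 1) / ((1 + l) * (1 + m)) * detv (B - A) (C - A) := by
      simp only [detv, Prod.smul_fst, Prod.smul_snd, Prod.fst_add, Prod.snd_add,
        Prod.fst_sub, Prod.snd_sub, smul_eq_mul]
      field_simp
      ring
    rw [heq]
    exact mul_ne_zero (by positivity) hABC
  have hdet2 : detv ((1 / (1 + m)) • C + (m / (1 + m)) • A - B)
      ((1 / (1 + n)) • A + (n / (1 + n)) • B - C) ≠ 0 := by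
    have heq : detv ((1 / (1 + m)) • C + (m / (1 + m)) • A - B)
        ((1 / (1 + n)) • A + (n / (1 + n)) • B - C)
        = (m * n + m + 1) / ((1 + m) * (1 + n)) * detv (B - A) (C - A) := by
      simp only [detv, Prod.smul_fst, Prod.smul_snd, Prod.fst_add, Prod.snd_add,
        Prod.fst_sub, Prod.snd_sub, smul_eq_mul]
      field_simp
      ring
    rw [heq]
    exact mul_ne_zero (by positivity) hABC
  have hdet3 : detv ((1 / (1 + n)) • A + (n / (1 + n)) • B - C)
      ((1 / (1 + l)) • B + (l / (1 + l)) • C - A) ≠ 0 := by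
    have heq : detv ((1 / (1 + n)) • A + (n / (1 + n)) • B - C)
        ((1 / (1 + l)) • B + (l / (1 + l)) • C - A)
        = (n * l + n + 1) / ((1 + n) * (1 + l)) * detv (B - A) (C - A) := by
      simp only [detv, Prod.smul_fst, Prod.smul_snd, Prod.fst_add, Prod.snd_add,
        Prod.fst_sub, Prod.snd_sub, smul_eq_mul]
      field_simp
      ring
    rw [heq]
    exact mul_ne_zero (by positivity) hABC
  refine ⟨⟨P0, hPAL, hPBM⟩, ⟨Q0, hQBM, hQCN⟩, ⟨R0, hRCN, hRAL⟩, ?_⟩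
  intro P Q R hP hQ hR
  have eP : P = P0 := line_inter_unique hdet1 hP ⟨hPAL, hPBM⟩
  have eQ : Q = Q0 := line_inter_unique hdet2 hQ ⟨hQBM, hQCN⟩
  have eR : R = R0 := line_inter_unique hdet3 hR ⟨hRCN, hRAL⟩
  rw [eP, eQ, eR]
  have harea : detv (Q0 - P0) (R0 - P0)
      = (l * m * n - 1) ^ 2 /
          ((l * m + l + 1) * (m * n + m + 1) * (n * l + n + 1)) *
        detv (B - A) (C - A) := by
    simp only [hP0, hQ0, hR0, detv, Prod.smul_fst, Prod.smul_snd, Prod.fst_add,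
      Prod.snd_add, Prod.fst_sub, Prod.snd_sub, smul_eq_mul]
    field_simp
    ring
  have hk : (0:ℝ) ≤ (l * m * n - 1) ^ 2 /
      ((l * m + l + 1) * (m * n + m + 1) * (n * l + n + 1)) := by positivity
  unfold area3
  rw [harea, abs_mul, abs_of_nonneg hk]
  ring
end

section
/- Let A, B, C be affinely independent points in ℝ², and λ, μ, ν > 0 with λμν = 1. Let L = (B + λC)/(1+λ), M = (C + μA)/(1+μ), N = (A + νB)/(1+ν). Then the three cevians AL, BM, CN are concurrent (Ceva's theorem as the degenerate case of Routh's theorem). -/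
/-- Ceva's theorem as the degenerate case of Routh's theorem. -/
theorem ceva_concurrent (A B C : ℝ × ℝ) (hABC : detv (B - A) (C - A) ≠ 0)
    (l m n : ℝ) (hl : 0 < l) (hm : 0 < m) (hn : 0 < n) (hlmn : l * m * n = 1)
    (L M N : ℝ × ℝ)
    (hL : L = (1 / (1 + l)) • B + (l / (1 + l)) • C)
    (hM : M = (1 / (1 + m)) • C + (m / (1 + m)) • A)
    (hN : N = (1 / (1 + n)) • A + (n / (1 + n)) • B) :
    ∃ X, X ∈ lineTh A L ∧ X ∈ lineTh B M ∧ X ∈ lineTh C N := by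
  subst hL hM hN
  have hmval : m = 1 / (l * n) := by
    field_simp
    nlinarith [hlmn]
  subst hmval
  have hs : (1 + n + n * l) ≠ 0 := by positivity
  have hls : (1 + l) ≠ 0 := by positivity
  have hms : (1 + 1 / (l * n)) ≠ 0 := by positivity
  have hns : (1 + n) ≠ 0 := by positivity
  refine ⟨(1 / (1 + n + n * l)) • A + (n / (1 + n + n * l)) • B
      + ((n * l) / (1 + n + n * l)) • C,
    ⟨n * (1 + l) / (1 + n + n * l), ?_⟩,
    ⟨(1 + n * l) / (1 + n + n * l), ?_⟩,
    ⟨(1 + n) / (1 + n + n * l), ?_⟩⟩ <;>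
  · refine Prod.ext ?_ ?_ <;>
    · simp only [Prod.fst_add, Prod.snd_add, Prod.smul_fst, Prod.smul_snd,
        Prod.fst_sub, Prod.snd_sub, smul_eq_mul]
      field_simp
      ring
end

section
/- Let A₁, A₂, A₃ be affinely independent points in ℝ² and λ > 0. Divide each side in ratios 1:λ:1 (so each side has two division points at parameters 1/(λ+2) and (λ+1)/(λ+2)). Connect each division point to the opposite vertex, giving six cevians. The six consecutive pairwise intersections I, J, K, L, M, N of adjacent cevians (as in Routh-type configuration) form a hexagon whose area equals 2λ² / ((3+λ)(2λ+3)) times the area of triangle A₁A₂A₃. -/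
lemma inter_unique (P Q R S X : ℝ × ℝ) (t : ℝ)
    (h1 : X ∈ lineTh P Q) (h2 : X ∈ lineTh R S)
    (hD : detv (Q - P) (S - R) ≠ 0)
    (ht : detv (R - P) (S - R) = t * detv (Q - P) (S - R)) :
    X = P + t • (Q - P) := by
  obtain ⟨a, ha⟩ := h1
  obtain ⟨b, hb⟩ := h2
  have hab := ha.symm.trans hb
  have e1 : P.1 + a * (Q.1 - P.1) = R.1 + b * (S.1 - R.1) := by
    have := congrArg Prod.fst hab
    simpa [Prod.fst_add, Prod.fst_sub, smul_eq_mul] using this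
  have e2 : P.2 + a * (Q.2 - P.2) = R.2 + b * (S.2 - R.2) := by
    have := congrArg Prod.snd hab
    simpa [Prod.snd_add, Prod.snd_sub, smul_eq_mul] using this
  have key : a * detv (Q - P) (S - R) = t * detv (Q - P) (S - R) := by
    rw [← ht]
    simp only [detv, Prod.fst_sub, Prod.snd_sub]
    linear_combination (S.2 - R.2) * e1 - (S.1 - R.1) * e2
  have hat : a = t := mul_right_cancel₀ hD key
  rw [ha, hat]

set_option maxHeartbeats 2000000 in
/-- Dividing each side of a triangle in ratios 1 : λ : 1 and joining the division
points to the opposite vertices yields a central hexagon of area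
2λ²/((3+λ)(2λ+3)) times the triangle's area. -/
theorem hexagon_one_lambda_one (A1 A2 A3 : ℝ × ℝ)
    (hind : detv (A2 - A1) (A3 - A1) ≠ 0) (l : ℝ) (hl : 0 < l)
    (A11 A12 A21 A22 A31 A32 : ℝ × ℝ)
    (hA11 : A11 = ((l + 1) / (l + 2)) • A2 + (1 / (l + 2)) • A3)
    (hA12 : A12 = (1 / (l + 2)) • A2 + ((l + 1) / (l + 2)) • A3)
    (hA21 : A21 = ((l + 1) / (l + 2)) • A3 + (1 / (l + 2)) • A1)
    (hA22 : A22 = (1 / (l + 2)) • A3 + ((l + 1) / (l + 2)) • A1)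
    (hA31 : A31 = ((l + 1) / (l + 2)) • A1 + (1 / (l + 2)) • A2)
    (hA32 : A32 = (1 / (l + 2)) • A1 + ((l + 1) / (l + 2)) • A2)
    (I J K L M N : ℝ × ℝ)
    (hI : I ∈ lineTh A1 A11 ∩ lineTh A3 A32)
    (hJ : J ∈ lineTh A2 A21 ∩ lineTh A3 A32)
    (hK : K ∈ lineTh A2 A21 ∩ lineTh A1 A12)
    (hL : L ∈ lineTh A3 A31 ∩ lineTh A1 A12)
    (hM : M ∈ lineTh A2 A22 ∩ lineTh A3 A31)
    (hN : N ∈ lineTh A1 A11 ∩ lineTh A2 A22) :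
    area3 I J K + area3 I K L + area3 I L M + area3 I M N =
      2 * l ^ 2 / ((3 + l) * (2 * l + 3)) * area3 A1 A2 A3 := by
  set d : ℝ := detv (A2 - A1) (A3 - A1) with hd
  have h2 : l + 2 ≠ 0 := by linarith
  have h3 : l + 3 ≠ 0 := by linarith
  have h3' : (3 : ℝ) + l ≠ 0 := by linarith
  have h23 : 2 * l + 3 ≠ 0 := by linarith
  have h1 : l + 1 ≠ 0 := by linarith
  subst hA11 hA12 hA21 hA22 hA31 hA32
  -- determinant computations
  simp only [detv, Prod.fst_sub, Prod.snd_sub, Prod.fst_add, Prod.snd_add,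
    Prod.smul_fst, Prod.smul_snd, smul_eq_mul] at hd
  -- helper to compute detv of expressions
  have hDI : detv ((((l + 1) / (l + 2)) • A2 + (1 / (l + 2)) • A3) - A1)
      ((((1 / (l + 2)) • A1 + ((l + 1) / (l + 2)) • A2)) - A3) =
      (-(l + 1) * (l + 3) / (l + 2) ^ 2) * d := by
    simp only [detv, Prod.fst_sub, Prod.snd_sub, Prod.fst_add, Prod.snd_add,
      Prod.smul_fst, Prod.smul_snd, smul_eq_mul, hd]
    field_simp
    ring
  have hDJ : detv ((((l + 1) / (l + 2)) • A3 + (1 / (l + 2)) • A1) - A2)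
      ((((1 / (l + 2)) • A1 + ((l + 1) / (l + 2)) • A2)) - A3) =
      ((2 * l + 3) / (l + 2) ^ 2) * d := by
    simp only [detv, Prod.fst_sub, Prod.snd_sub, Prod.fst_add, Prod.snd_add,
      Prod.smul_fst, Prod.smul_snd, smul_eq_mul, hd]
    field_simp
    ring
  have hDK : detv ((((l + 1) / (l + 2)) • A3 + (1 / (l + 2)) • A1) - A2)
      ((((1 / (l + 2)) • A2 + ((l + 1) / (l + 2)) • A3)) - A1) =
      (-(l + 1) * (l + 3) / (l + 2) ^ 2) * d := by
    simp only [detv, Prod.fst_sub, Prod.snd_sub, Prod.fst_add, Prod.snd_add,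
      Prod.smul_fst, Prod.smul_snd, smul_eq_mul, hd]
    field_simp
    ring
  have hDL : detv ((((l + 1) / (l + 2)) • A1 + (1 / (l + 2)) • A2) - A3)
      ((((1 / (l + 2)) • A2 + ((l + 1) / (l + 2)) • A3)) - A1) =
      ((2 * l + 3) / (l + 2) ^ 2) * d := by
    simp only [detv, Prod.fst_sub, Prod.snd_sub, Prod.fst_add, Prod.snd_add,
      Prod.smul_fst, Prod.smul_snd, smul_eq_mul, hd]
    field_simp
    ring
  have hDM : detv ((((1 / (l + 2)) • A3 + ((l + 1) / (l + 2)) • A1)) - A2)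
      ((((l + 1) / (l + 2)) • A1 + (1 / (l + 2)) • A2) - A3) =
      ((l + 1) * (l + 3) / (l + 2) ^ 2) * d := by
    simp only [detv, Prod.fst_sub, Prod.snd_sub, Prod.fst_add, Prod.snd_add,
      Prod.smul_fst, Prod.smul_snd, smul_eq_mul, hd]
    field_simp
    ring
  have hDN : detv ((((l + 1) / (l + 2)) • A2 + (1 / (l + 2)) • A3) - A1)
      ((((1 / (l + 2)) • A3 + ((l + 1) / (l + 2)) • A1)) - A2) =
      ((2 * l + 3) / (l + 2) ^ 2) * d := by
    simp only [detv, Prod.fst_sub, Prod.snd_sub, Prod.fst_add, Prod.snd_add,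
      Prod.smul_fst, Prod.smul_snd, smul_eq_mul, hd]
    field_simp
    ring
  have cneg : -(l + 1) * (l + 3) / (l + 2) ^ 2 ≠ 0 := by
    apply div_ne_zero (mul_ne_zero (neg_ne_zero.mpr h1) h3) (pow_ne_zero _ h2)
  have cpos : (l + 1) * (l + 3) / (l + 2) ^ 2 ≠ 0 :=
    div_ne_zero (mul_ne_zero h1 h3) (pow_ne_zero _ h2)
  have cmid : (2 * l + 3) / (l + 2) ^ 2 ≠ 0 := div_ne_zero h23 (pow_ne_zero _ h2)
  -- explicit points
  have hIpt : I = A1 + ((l + 2) / (l + 3)) •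
      ((((l + 1) / (l + 2)) • A2 + (1 / (l + 2)) • A3) - A1) := by
    refine inter_unique _ _ _ _ _ _ hI.1 hI.2 (hDI ▸ mul_ne_zero cneg hind) ?_
    rw [hDI]
    simp only [detv, Prod.fst_sub, Prod.snd_sub, Prod.fst_add, Prod.snd_add,
      Prod.smul_fst, Prod.smul_snd, smul_eq_mul, hd]
    field_simp
    ring
  have hJpt : J = A2 + ((l + 2) / (2 * l + 3)) •
      ((((l + 1) / (l + 2)) • A3 + (1 / (l + 2)) • A1) - A2) := by
    refine inter_unique _ _ _ _ _ _ hJ.1 hJ.2 (hDJ ▸ mul_ne_zero cmid hind) ?_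
    rw [hDJ]
    simp only [detv, Prod.fst_sub, Prod.snd_sub, Prod.fst_add, Prod.snd_add,
      Prod.smul_fst, Prod.smul_snd, smul_eq_mul, hd]
    field_simp
    ring
  have hKpt : K = A2 + ((l + 2) / (l + 3)) •
      ((((l + 1) / (l + 2)) • A3 + (1 / (l + 2)) • A1) - A2) := by
    refine inter_unique _ _ _ _ _ _ hK.1 hK.2 (hDK ▸ mul_ne_zero cneg hind) ?_
    rw [hDK]
    simp only [detv, Prod.fst_sub, Prod.snd_sub, Prod.fst_add, Prod.snd_add,
      Prod.smul_fst, Prod.smul_snd, smul_eq_mul, hd]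
    field_simp
    ring
  have hLpt : L = A3 + ((l + 2) / (2 * l + 3)) •
      ((((l + 1) / (l + 2)) • A1 + (1 / (l + 2)) • A2) - A3) := by
    refine inter_unique _ _ _ _ _ _ hL.1 hL.2 (hDL ▸ mul_ne_zero cmid hind) ?_
    rw [hDL]
    simp only [detv, Prod.fst_sub, Prod.snd_sub, Prod.fst_add, Prod.snd_add,
      Prod.smul_fst, Prod.smul_snd, smul_eq_mul, hd]
    field_simp
    ring
  have hMpt : M = A2 + ((l + 2) / (l + 3)) •
      ((((1 / (l + 2)) • A3 + ((l + 1) / (l + 2)) • A1)) - A2) := by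
    refine inter_unique _ _ _ _ _ _ hM.1 hM.2 (hDM ▸ mul_ne_zero cpos hind) ?_
    rw [hDM]
    simp only [detv, Prod.fst_sub, Prod.snd_sub, Prod.fst_add, Prod.snd_add,
      Prod.smul_fst, Prod.smul_snd, smul_eq_mul, hd]
    field_simp
    ring
  have hNpt : N = A1 + ((l + 2) / (2 * l + 3)) •
      ((((l + 1) / (l + 2)) • A2 + (1 / (l + 2)) • A3) - A1) := by
    refine inter_unique _ _ _ _ _ _ hN.1 hN.2 (hDN ▸ mul_ne_zero cmid hind) ?_
    rw [hDN]
    simp only [detv, Prod.fst_sub, Prod.snd_sub, Prod.fst_add, Prod.snd_add,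
      Prod.smul_fst, Prod.smul_snd, smul_eq_mul, hd]
    field_simp
    ring
  -- coefficients of the four triangles
  set c1 : ℝ := l ^ 2 / ((3 + l) ^ 2 * (2 * l + 3)) with hc1
  set c2 : ℝ := l ^ 2 * (l + 2) / ((3 + l) ^ 2 * (2 * l + 3)) with hc2
  have hdetIJK : detv (J - I) (K - I) = c1 * d := by
    rw [hIpt, hJpt, hKpt, hc1]
    simp only [detv, Prod.fst_sub, Prod.snd_sub, Prod.fst_add, Prod.snd_add,
      Prod.smul_fst, Prod.smul_snd, smul_eq_mul, hd]
    field_simp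
    ring
  have hdetIKL : detv (K - I) (L - I) = c2 * d := by
    rw [hIpt, hKpt, hLpt, hc2]
    simp only [detv, Prod.fst_sub, Prod.snd_sub, Prod.fst_add, Prod.snd_add,
      Prod.smul_fst, Prod.smul_snd, smul_eq_mul, hd]
    field_simp
    ring
  have hdetILM : detv (L - I) (M - I) = c2 * d := by
    rw [hIpt, hLpt, hMpt, hc2]
    simp only [detv, Prod.fst_sub, Prod.snd_sub, Prod.fst_add, Prod.snd_add,
      Prod.smul_fst, Prod.smul_snd, smul_eq_mul, hd]
    field_simp
    ring
  have hdetIMN : detv (M - I) (N - I) = c1 * d := by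
    rw [hIpt, hMpt, hNpt, hc1]
    simp only [detv, Prod.fst_sub, Prod.snd_sub, Prod.fst_add, Prod.snd_add,
      Prod.smul_fst, Prod.smul_snd, smul_eq_mul, hd]
    field_simp
    ring
  have hc1nn : 0 ≤ c1 := by
    apply div_nonneg (by positivity) (by positivity)
  have hc2nn : 0 ≤ c2 := by
    apply div_nonneg (by positivity) (by positivity)
  unfold area3
  rw [hdetIJK, hdetIKL, hdetILM, hdetIMN, abs_mul, abs_mul,
    abs_of_nonneg hc1nn, abs_of_nonneg hc2nn]
  rw [hc1, hc2]
  field_simp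
  ring
end

section
/- Let A, B, C be affinely independent points in ℝ². If each side of triangle ABC is trisected and each trisection point is joined to the opposite vertex, then the central hexagon formed by these six cevians has area one-tenth the area of triangle ABC (Marion Walter's theorem). -/
lemma solve2 (u v : ℝ × ℝ) (hd : detv u v ≠ 0) {a b : ℝ}
    (h1 : a * u.1 + b * v.1 = 0) (h2 : a * u.2 + b * v.2 = 0) : a = 0 ∧ b = 0 := by
  have ha : a * detv u v = 0 := by unfold detv; linear_combination v.2 * h1 - v.1 * h2
  have hb : b * detv u v = 0 := by unfold detv; linear_combination u.1 * h2 - u.2 * h1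
  exact ⟨by rcases mul_eq_zero.1 ha with h | h; exact h; exact absurd h hd,
         by rcases mul_eq_zero.1 hb with h | h; exact h; exact absurd h hd⟩

set_option maxHeartbeats 2000000 in
/-- Marion Walter's theorem: the central hexagon formed by joining the trisection
points of the sides to the opposite vertices has one tenth the triangle's area. -/
theorem marion_walter (A B C : ℝ × ℝ) (hind : detv (B - A) (C - A) ≠ 0)
    (P1 P2 Q1 Q2 R1 R2 : ℝ × ℝ)
    (hP1 : P1 = ((2 : ℝ) / 3) • B + ((1 : ℝ) / 3) • C)
    (hP2 : P2 = ((1 : ℝ) / 3) • B + ((2 : ℝ) / 3) • C)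
    (hQ1 : Q1 = ((2 : ℝ) / 3) • C + ((1 : ℝ) / 3) • A)
    (hQ2 : Q2 = ((1 : ℝ) / 3) • C + ((2 : ℝ) / 3) • A)
    (hR1 : R1 = ((2 : ℝ) / 3) • A + ((1 : ℝ) / 3) • B)
    (hR2 : R2 = ((1 : ℝ) / 3) • A + ((2 : ℝ) / 3) • B)
    (I J K L M N : ℝ × ℝ)
    (hI : I ∈ lineTh A P1 ∩ lineTh C R2)
    (hJ : J ∈ lineTh B Q1 ∩ lineTh C R2)
    (hK : K ∈ lineTh B Q1 ∩ lineTh A P2)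
    (hL : L ∈ lineTh C R1 ∩ lineTh A P2)
    (hM : M ∈ lineTh B Q2 ∩ lineTh C R1)
    (hN : N ∈ lineTh A P1 ∩ lineTh B Q2) :
    area3 I J K + area3 I K L + area3 I L M + area3 I M N =
      (1 / 10) * area3 A B C := by
  subst hP1 hP2 hQ1 hQ2 hR1 hR2
  simp only [lineTh, Set.mem_inter_iff, Set.mem_setOf_eq] at hI hJ hK hL hM hN
  obtain ⟨⟨tI, htI⟩, ⟨sI, hsI⟩⟩ := hI
  have htI1 := congrArg Prod.fst htI
  have htI2 := congrArg Prod.snd htI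
  have hsI1 := congrArg Prod.fst hsI
  have hsI2 := congrArg Prod.snd hsI
  simp only [Prod.fst_add, Prod.snd_add, Prod.fst_sub, Prod.snd_sub, Prod.smul_fst,
    Prod.smul_snd, smul_eq_mul] at htI1 htI2 hsI1 hsI2
  have eI1 : (tI * (2/3 : ℝ) - sI * (2/3 : ℝ) + (0 : ℝ)) * (B.1 - A.1) + (tI * (1/3 : ℝ) - sI * (-1 : ℝ) + (-1 : ℝ)) * (C.1 - A.1) = 0 := by
    linear_combination hsI1 - htI1
  have eI2 : (tI * (2/3 : ℝ) - sI * (2/3 : ℝ) + (0 : ℝ)) * (B.2 - A.2) + (tI * (1/3 : ℝ) - sI * (-1 : ℝ) + (-1 : ℝ)) * (C.2 - A.2) = 0 := by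
    linear_combination hsI2 - htI2
  obtain ⟨hαI, hβI⟩ := solve2 _ _ hind eI1 eI2
  have htvI : tI = (3/4 : ℝ) := by linarith
  rw [htvI] at htI1 htI2
  have hI1 : I.1 = (1/4 : ℝ) * A.1 + (1/2 : ℝ) * B.1 + (1/4 : ℝ) * C.1 := by linarith
  have hI2 : I.2 = (1/4 : ℝ) * A.2 + (1/2 : ℝ) * B.2 + (1/4 : ℝ) * C.2 := by linarith
  clear htI1 htI2 hsI1 hsI2 eI1 eI2 hαI hβI htvI htI hsI
  obtain ⟨⟨tJ, htJ⟩, ⟨sJ, hsJ⟩⟩ := hJ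
  have htJ1 := congrArg Prod.fst htJ
  have htJ2 := congrArg Prod.snd htJ
  have hsJ1 := congrArg Prod.fst hsJ
  have hsJ2 := congrArg Prod.snd hsJ
  simp only [Prod.fst_add, Prod.snd_add, Prod.fst_sub, Prod.snd_sub, Prod.smul_fst,
    Prod.smul_snd, smul_eq_mul] at htJ1 htJ2 hsJ1 hsJ2
  have eJ1 : (tJ * (-1 : ℝ) - sJ * (2/3 : ℝ) + (1 : ℝ)) * (B.1 - A.1) + (tJ * (2/3 : ℝ) - sJ * (-1 : ℝ) + (-1 : ℝ)) * (C.1 - A.1) = 0 := by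
    linear_combination hsJ1 - htJ1
  have eJ2 : (tJ * (-1 : ℝ) - sJ * (2/3 : ℝ) + (1 : ℝ)) * (B.2 - A.2) + (tJ * (2/3 : ℝ) - sJ * (-1 : ℝ) + (-1 : ℝ)) * (C.2 - A.2) = 0 := by
    linear_combination hsJ2 - htJ2
  obtain ⟨hαJ, hβJ⟩ := solve2 _ _ hind eJ1 eJ2
  have htvJ : tJ = (3/5 : ℝ) := by linarith
  rw [htvJ] at htJ1 htJ2
  have hJ1 : J.1 = (1/5 : ℝ) * A.1 + (2/5 : ℝ) * B.1 + (2/5 : ℝ) * C.1 := by linarith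
  have hJ2 : J.2 = (1/5 : ℝ) * A.2 + (2/5 : ℝ) * B.2 + (2/5 : ℝ) * C.2 := by linarith
  clear htJ1 htJ2 hsJ1 hsJ2 eJ1 eJ2 hαJ hβJ htvJ htJ hsJ
  obtain ⟨⟨tK, htK⟩, ⟨sK, hsK⟩⟩ := hK
  have htK1 := congrArg Prod.fst htK
  have htK2 := congrArg Prod.snd htK
  have hsK1 := congrArg Prod.fst hsK
  have hsK2 := congrArg Prod.snd hsK
  simp only [Prod.fst_add, Prod.snd_add, Prod.fst_sub, Prod.snd_sub, Prod.smul_fst,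
    Prod.smul_snd, smul_eq_mul] at htK1 htK2 hsK1 hsK2
  have eK1 : (tK * (-1 : ℝ) - sK * (1/3 : ℝ) + (1 : ℝ)) * (B.1 - A.1) + (tK * (2/3 : ℝ) - sK * (2/3 : ℝ) + (0 : ℝ)) * (C.1 - A.1) = 0 := by
    linear_combination hsK1 - htK1
  have eK2 : (tK * (-1 : ℝ) - sK * (1/3 : ℝ) + (1 : ℝ)) * (B.2 - A.2) + (tK * (2/3 : ℝ) - sK * (2/3 : ℝ) + (0 : ℝ)) * (C.2 - A.2) = 0 := by
    linear_combination hsK2 - htK2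
  obtain ⟨hαK, hβK⟩ := solve2 _ _ hind eK1 eK2
  have htvK : tK = (3/4 : ℝ) := by linarith
  rw [htvK] at htK1 htK2
  have hK1 : K.1 = (1/4 : ℝ) * A.1 + (1/4 : ℝ) * B.1 + (1/2 : ℝ) * C.1 := by linarith
  have hK2 : K.2 = (1/4 : ℝ) * A.2 + (1/4 : ℝ) * B.2 + (1/2 : ℝ) * C.2 := by linarith
  clear htK1 htK2 hsK1 hsK2 eK1 eK2 hαK hβK htvK htK hsK
  obtain ⟨⟨tL, htL⟩, ⟨sL, hsL⟩⟩ := hL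
  have htL1 := congrArg Prod.fst htL
  have htL2 := congrArg Prod.snd htL
  have hsL1 := congrArg Prod.fst hsL
  have hsL2 := congrArg Prod.snd hsL
  simp only [Prod.fst_add, Prod.snd_add, Prod.fst_sub, Prod.snd_sub, Prod.smul_fst,
    Prod.smul_snd, smul_eq_mul] at htL1 htL2 hsL1 hsL2
  have eL1 : (tL * (1/3 : ℝ) - sL * (1/3 : ℝ) + (0 : ℝ)) * (B.1 - A.1) + (tL * (-1 : ℝ) - sL * (2/3 : ℝ) + (1 : ℝ)) * (C.1 - A.1) = 0 := by
    linear_combination hsL1 - htL1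
  have eL2 : (tL * (1/3 : ℝ) - sL * (1/3 : ℝ) + (0 : ℝ)) * (B.2 - A.2) + (tL * (-1 : ℝ) - sL * (2/3 : ℝ) + (1 : ℝ)) * (C.2 - A.2) = 0 := by
    linear_combination hsL2 - htL2
  obtain ⟨hαL, hβL⟩ := solve2 _ _ hind eL1 eL2
  have htvL : tL = (3/5 : ℝ) := by linarith
  rw [htvL] at htL1 htL2
  have hL1 : L.1 = (2/5 : ℝ) * A.1 + (1/5 : ℝ) * B.1 + (2/5 : ℝ) * C.1 := by linarith
  have hL2 : L.2 = (2/5 : ℝ) * A.2 + (1/5 : ℝ) * B.2 + (2/5 : ℝ) * C.2 := by linarith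
  clear htL1 htL2 hsL1 hsL2 eL1 eL2 hαL hβL htvL htL hsL
  obtain ⟨⟨tM, htM⟩, ⟨sM, hsM⟩⟩ := hM
  have htM1 := congrArg Prod.fst htM
  have htM2 := congrArg Prod.snd htM
  have hsM1 := congrArg Prod.fst hsM
  have hsM2 := congrArg Prod.snd hsM
  simp only [Prod.fst_add, Prod.snd_add, Prod.fst_sub, Prod.snd_sub, Prod.smul_fst,
    Prod.smul_snd, smul_eq_mul] at htM1 htM2 hsM1 hsM2
  have eM1 : (tM * (-1 : ℝ) - sM * (1/3 : ℝ) + (1 : ℝ)) * (B.1 - A.1) + (tM * (1/3 : ℝ) - sM * (-1 : ℝ) + (-1 : ℝ)) * (C.1 - A.1) = 0 := by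
    linear_combination hsM1 - htM1
  have eM2 : (tM * (-1 : ℝ) - sM * (1/3 : ℝ) + (1 : ℝ)) * (B.2 - A.2) + (tM * (1/3 : ℝ) - sM * (-1 : ℝ) + (-1 : ℝ)) * (C.2 - A.2) = 0 := by
    linear_combination hsM2 - htM2
  obtain ⟨hαM, hβM⟩ := solve2 _ _ hind eM1 eM2
  have htvM : tM = (3/4 : ℝ) := by linarith
  rw [htvM] at htM1 htM2
  have hM1 : M.1 = (1/2 : ℝ) * A.1 + (1/4 : ℝ) * B.1 + (1/4 : ℝ) * C.1 := by linarith
  have hM2 : M.2 = (1/2 : ℝ) * A.2 + (1/4 : ℝ) * B.2 + (1/4 : ℝ) * C.2 := by linarith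
  clear htM1 htM2 hsM1 hsM2 eM1 eM2 hαM hβM htvM htM hsM
  obtain ⟨⟨tN, htN⟩, ⟨sN, hsN⟩⟩ := hN
  have htN1 := congrArg Prod.fst htN
  have htN2 := congrArg Prod.snd htN
  have hsN1 := congrArg Prod.fst hsN
  have hsN2 := congrArg Prod.snd hsN
  simp only [Prod.fst_add, Prod.snd_add, Prod.fst_sub, Prod.snd_sub, Prod.smul_fst,
    Prod.smul_snd, smul_eq_mul] at htN1 htN2 hsN1 hsN2
  have eN1 : (tN * (2/3 : ℝ) - sN * (-1 : ℝ) + (-1 : ℝ)) * (B.1 - A.1) + (tN * (1/3 : ℝ) - sN * (1/3 : ℝ) + (0 : ℝ)) * (C.1 - A.1) = 0 := by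
    linear_combination hsN1 - htN1
  have eN2 : (tN * (2/3 : ℝ) - sN * (-1 : ℝ) + (-1 : ℝ)) * (B.2 - A.2) + (tN * (1/3 : ℝ) - sN * (1/3 : ℝ) + (0 : ℝ)) * (C.2 - A.2) = 0 := by
    linear_combination hsN2 - htN2
  obtain ⟨hαN, hβN⟩ := solve2 _ _ hind eN1 eN2
  have htvN : tN = (3/5 : ℝ) := by linarith
  rw [htvN] at htN1 htN2
  have hN1 : N.1 = (2/5 : ℝ) * A.1 + (2/5 : ℝ) * B.1 + (1/5 : ℝ) * C.1 := by linarith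
  have hN2 : N.2 = (2/5 : ℝ) * A.2 + (2/5 : ℝ) * B.2 + (1/5 : ℝ) * C.2 := by linarith
  clear htN1 htN2 hsN1 hsN2 eN1 eN2 hαN hβN htvN htN hsN
  have dJK : detv (J - I) (K - I) = (1/80 : ℝ) * detv (B - A) (C - A) := by
    simp only [detv, Prod.fst_sub, Prod.snd_sub]
    rw [hI1, hI2, hJ1, hJ2, hK1, hK2]; ring
  have aJK : area3 I J K = (1/80 : ℝ) * |detv (B - A) (C - A)| / 2 := by
    rw [area3, dJK, abs_mul, abs_of_pos (by norm_num : (0:ℝ) < (1/80 : ℝ))]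
  have dKL : detv (K - I) (L - I) = (3/80 : ℝ) * detv (B - A) (C - A) := by
    simp only [detv, Prod.fst_sub, Prod.snd_sub]
    rw [hI1, hI2, hK1, hK2, hL1, hL2]; ring
  have aKL : area3 I K L = (3/80 : ℝ) * |detv (B - A) (C - A)| / 2 := by
    rw [area3, dKL, abs_mul, abs_of_pos (by norm_num : (0:ℝ) < (3/80 : ℝ))]
  have dLM : detv (L - I) (M - I) = (3/80 : ℝ) * detv (B - A) (C - A) := by
    simp only [detv, Prod.fst_sub, Prod.snd_sub]
    rw [hI1, hI2, hL1, hL2, hM1, hM2]; ring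
  have aLM : area3 I L M = (3/80 : ℝ) * |detv (B - A) (C - A)| / 2 := by
    rw [area3, dLM, abs_mul, abs_of_pos (by norm_num : (0:ℝ) < (3/80 : ℝ))]
  have dMN : detv (M - I) (N - I) = (1/80 : ℝ) * detv (B - A) (C - A) := by
    simp only [detv, Prod.fst_sub, Prod.snd_sub]
    rw [hI1, hI2, hM1, hM2, hN1, hN2]; ring
  have aMN : area3 I M N = (1/80 : ℝ) * |detv (B - A) (C - A)| / 2 := by
    rw [area3, dMN, abs_mul, abs_of_pos (by norm_num : (0:ℝ) < (1/80 : ℝ))]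
  have habc : area3 A B C = |detv (B - A) (C - A)| / 2 := rfl
  rw [aJK, aKL, aLM, aMN, habc]; ring
end

section
/- Let n = 2k+1 be odd with k ≥ 1. Let A₁, A₂, A₃ be affinely independent points in ℝ². Divide each side of the triangle into n equal parts, and draw the cevians from each vertex to the k-th and (k+1)-th division points of the opposite side. The central hexagon formed by these six cevians has area 8/(9n² − 1) times the area of the triangle (Morgan's theorem). -/
/-- The j-th of the n equal division points of the segment PQ. -/
noncomputable def divpt (n j : ℕ) (P Q : ℝ × ℝ) : ℝ × ℝ :=
  (((n : ℝ) - j) / n) • P + ((j : ℝ) / n) • Q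

lemma inter_eq (P Q R S X : ℝ × ℝ) (s : ℝ)
    (hD : detv (Q - P) (S - R) ≠ 0)
    (hnum : detv (R - P) (S - R) = s * detv (Q - P) (S - R))
    (h1 : X ∈ lineTh P Q) (h2 : X ∈ lineTh R S) :
    X = P + s • (Q - P) := by
  obtain ⟨a, ha⟩ := h1
  obtain ⟨b, hb⟩ := h2
  have h := ha.symm.trans hb
  have h1' := congrArg Prod.fst h
  have h2' := congrArg Prod.snd h
  simp only [Prod.fst_add, Prod.snd_add, Prod.fst_sub, Prod.snd_sub,
    Prod.smul_fst, Prod.smul_snd, smul_eq_mul] at h1' h2'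
  have key : a * detv (Q - P) (S - R) = s * detv (Q - P) (S - R) := by
    rw [← hnum]
    simp only [detv, Prod.fst_sub, Prod.snd_sub]
    linear_combination (S.2 - R.2) * h1' - (S.1 - R.1) * h2'
  rw [ha, mul_right_cancel₀ hD key]

set_option maxHeartbeats 2000000 in
/-- Morgan's theorem: for odd n = 2k+1, the central hexagon formed by the cevians
to the k-th and (k+1)-th n-division points has area 8/(9n²−1) times the triangle. -/
theorem morgan (k : ℕ) (hk : 1 ≤ k) (n : ℕ) (hn : n = 2 * k + 1)
    (A1 A2 A3 : ℝ × ℝ) (hind : detv (A2 - A1) (A3 - A1) ≠ 0)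
    (I J K L M N : ℝ × ℝ)
    (hI : I ∈ lineTh A1 (divpt n k A2 A3) ∩ lineTh A3 (divpt n (k + 1) A1 A2))
    (hJ : J ∈ lineTh A2 (divpt n k A3 A1) ∩ lineTh A3 (divpt n (k + 1) A1 A2))
    (hK : K ∈ lineTh A2 (divpt n k A3 A1) ∩ lineTh A1 (divpt n (k + 1) A2 A3))
    (hL : L ∈ lineTh A3 (divpt n k A1 A2) ∩ lineTh A1 (divpt n (k + 1) A2 A3))
    (hM : M ∈ lineTh A2 (divpt n (k + 1) A3 A1) ∩ lineTh A3 (divpt n k A1 A2))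
    (hN : N ∈ lineTh A1 (divpt n k A2 A3) ∩ lineTh A2 (divpt n (k + 1) A3 A1)) :
    area3 I J K + area3 I K L + area3 I L M + area3 I M N =
      8 / (9 * (n : ℝ) ^ 2 - 1) * area3 A1 A2 A3 := by
  have hkpos : (0:ℝ) < (k:ℝ) := by exact_mod_cast hk
  have h2k : (2*(k:ℝ)+1) ≠ 0 := by positivity
  have h31 : (3*(k:ℝ)+1) ≠ 0 := by positivity
  have h32 : (3*(k:ℝ)+2) ≠ 0 := by positivity
  have hnr : (n:ℝ) = 2*(k:ℝ)+1 := by rw [hn]; push_cast; ring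
  -- point I
  have hDI : detv (divpt n k A2 A3 - A1) (divpt n (k+1) A1 A2 - A3)
      = (-(((k:ℝ)+1)*(3*(k:ℝ)+1)/(2*(k:ℝ)+1)^2)) * detv (A2 - A1) (A3 - A1) := by
    simp only [divpt, detv, Prod.fst_add, Prod.snd_add, Prod.fst_sub, Prod.snd_sub,
      Prod.smul_fst, Prod.smul_snd, smul_eq_mul, hnr]
    push_cast
    field_simp
    ring
  have hDI0 : detv (divpt n k A2 A3 - A1) (divpt n (k+1) A1 A2 - A3) ≠ 0 := by
    rw [hDI]
    exact mul_ne_zero (neg_ne_zero.mpr (by positivity)) hind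
  have hnumI : detv (A3 - A1) (divpt n (k+1) A1 A2 - A3)
      = ((2*(k:ℝ)+1)/(3*(k:ℝ)+1)) *
        detv (divpt n k A2 A3 - A1) (divpt n (k+1) A1 A2 - A3) := by
    simp only [divpt, detv, Prod.fst_add, Prod.snd_add, Prod.fst_sub, Prod.snd_sub,
      Prod.smul_fst, Prod.smul_snd, smul_eq_mul, hnr]
    push_cast
    field_simp
    ring
  have hIval := inter_eq _ _ _ _ _ _ hDI0 hnumI hI.1 hI.2
  -- point J
  have hDJ : detv (divpt n k A3 A1 - A2) (divpt n (k+1) A1 A2 - A3)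
      = ((k:ℝ)*(3*(k:ℝ)+2)/(2*(k:ℝ)+1)^2) * detv (A2 - A1) (A3 - A1) := by
    simp only [divpt, detv, Prod.fst_add, Prod.snd_add, Prod.fst_sub, Prod.snd_sub,
      Prod.smul_fst, Prod.smul_snd, smul_eq_mul, hnr]
    push_cast
    field_simp
    ring
  have hDJ0 : detv (divpt n k A3 A1 - A2) (divpt n (k+1) A1 A2 - A3) ≠ 0 := by
    rw [hDJ]
    exact mul_ne_zero (by positivity) hind
  have hnumJ : detv (A3 - A2) (divpt n (k+1) A1 A2 - A3)
      = ((2*(k:ℝ)+1)/(3*(k:ℝ)+2)) *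
        detv (divpt n k A3 A1 - A2) (divpt n (k+1) A1 A2 - A3) := by
    simp only [divpt, detv, Prod.fst_add, Prod.snd_add, Prod.fst_sub, Prod.snd_sub,
      Prod.smul_fst, Prod.smul_snd, smul_eq_mul, hnr]
    push_cast
    field_simp
    ring
  have hJval := inter_eq _ _ _ _ _ _ hDJ0 hnumJ hJ.1 hJ.2
  -- point K
  have hDK : detv (divpt n k A3 A1 - A2) (divpt n (k+1) A2 A3 - A1)
      = (-(((k:ℝ)+1)*(3*(k:ℝ)+1)/(2*(k:ℝ)+1)^2)) * detv (A2 - A1) (A3 - A1) := by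
    simp only [divpt, detv, Prod.fst_add, Prod.snd_add, Prod.fst_sub, Prod.snd_sub,
      Prod.smul_fst, Prod.smul_snd, smul_eq_mul, hnr]
    push_cast
    field_simp
    ring
  have hDK0 : detv (divpt n k A3 A1 - A2) (divpt n (k+1) A2 A3 - A1) ≠ 0 := by
    rw [hDK]
    exact mul_ne_zero (neg_ne_zero.mpr (by positivity)) hind
  have hnumK : detv (A1 - A2) (divpt n (k+1) A2 A3 - A1)
      = ((2*(k:ℝ)+1)/(3*(k:ℝ)+1)) *
        detv (divpt n k A3 A1 - A2) (divpt n (k+1) A2 A3 - A1) := by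
    simp only [divpt, detv, Prod.fst_add, Prod.snd_add, Prod.fst_sub, Prod.snd_sub,
      Prod.smul_fst, Prod.smul_snd, smul_eq_mul, hnr]
    push_cast
    field_simp
    ring
  have hKval := inter_eq _ _ _ _ _ _ hDK0 hnumK hK.1 hK.2
  -- point L
  have hDL : detv (divpt n k A1 A2 - A3) (divpt n (k+1) A2 A3 - A1)
      = ((k:ℝ)*(3*(k:ℝ)+2)/(2*(k:ℝ)+1)^2) * detv (A2 - A1) (A3 - A1) := by
    simp only [divpt, detv, Prod.fst_add, Prod.snd_add, Prod.fst_sub, Prod.snd_sub,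
      Prod.smul_fst, Prod.smul_snd, smul_eq_mul, hnr]
    push_cast
    field_simp
    ring
  have hDL0 : detv (divpt n k A1 A2 - A3) (divpt n (k+1) A2 A3 - A1) ≠ 0 := by
    rw [hDL]
    exact mul_ne_zero (by positivity) hind
  have hnumL : detv (A1 - A3) (divpt n (k+1) A2 A3 - A1)
      = ((2*(k:ℝ)+1)/(3*(k:ℝ)+2)) *
        detv (divpt n k A1 A2 - A3) (divpt n (k+1) A2 A3 - A1) := by
    simp only [divpt, detv, Prod.fst_add, Prod.snd_add, Prod.fst_sub, Prod.snd_sub,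
      Prod.smul_fst, Prod.smul_snd, smul_eq_mul, hnr]
    push_cast
    field_simp
    ring
  have hLval := inter_eq _ _ _ _ _ _ hDL0 hnumL hL.1 hL.2
  -- point M
  have hDM : detv (divpt n (k+1) A3 A1 - A2) (divpt n k A1 A2 - A3)
      = ((((k:ℝ)+1)*(3*(k:ℝ)+1)/(2*(k:ℝ)+1)^2)) * detv (A2 - A1) (A3 - A1) := by
    simp only [divpt, detv, Prod.fst_add, Prod.snd_add, Prod.fst_sub, Prod.snd_sub,
      Prod.smul_fst, Prod.smul_snd, smul_eq_mul, hnr]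
    push_cast
    field_simp
    ring
  have hDM0 : detv (divpt n (k+1) A3 A1 - A2) (divpt n k A1 A2 - A3) ≠ 0 := by
    rw [hDM]
    exact mul_ne_zero (by positivity) hind
  have hnumM : detv (A3 - A2) (divpt n k A1 A2 - A3)
      = ((2*(k:ℝ)+1)/(3*(k:ℝ)+1)) *
        detv (divpt n (k+1) A3 A1 - A2) (divpt n k A1 A2 - A3) := by
    simp only [divpt, detv, Prod.fst_add, Prod.snd_add, Prod.fst_sub, Prod.snd_sub,
      Prod.smul_fst, Prod.smul_snd, smul_eq_mul, hnr]
    push_cast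
    field_simp
    ring
  have hMval := inter_eq _ _ _ _ _ _ hDM0 hnumM hM.1 hM.2
  -- point N
  have hDN : detv (divpt n k A2 A3 - A1) (divpt n (k+1) A3 A1 - A2)
      = ((k:ℝ)*(3*(k:ℝ)+2)/(2*(k:ℝ)+1)^2) * detv (A2 - A1) (A3 - A1) := by
    simp only [divpt, detv, Prod.fst_add, Prod.snd_add, Prod.fst_sub, Prod.snd_sub,
      Prod.smul_fst, Prod.smul_snd, smul_eq_mul, hnr]
    push_cast
    field_simp
    ring
  have hDN0 : detv (divpt n k A2 A3 - A1) (divpt n (k+1) A3 A1 - A2) ≠ 0 := by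
    rw [hDN]
    exact mul_ne_zero (by positivity) hind
  have hnumN : detv (A2 - A1) (divpt n (k+1) A3 A1 - A2)
      = ((2*(k:ℝ)+1)/(3*(k:ℝ)+2)) *
        detv (divpt n k A2 A3 - A1) (divpt n (k+1) A3 A1 - A2) := by
    simp only [divpt, detv, Prod.fst_add, Prod.snd_add, Prod.fst_sub, Prod.snd_sub,
      Prod.smul_fst, Prod.smul_snd, smul_eq_mul, hnr]
    push_cast
    field_simp
    ring
  have hNval := inter_eq _ _ _ _ _ _ hDN0 hnumN hN.1 hN.2
  -- the four sub-triangle determinants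
  have hc1 : detv (J - I) (K - I)
      = ((k:ℝ)/((3*(k:ℝ)+1)^2*(3*(k:ℝ)+2))) * detv (A2 - A1) (A3 - A1) := by
    rw [hIval, hJval, hKval]
    simp only [divpt, detv, Prod.fst_add, Prod.snd_add, Prod.fst_sub, Prod.snd_sub,
      Prod.smul_fst, Prod.smul_snd, smul_eq_mul, hnr]
    push_cast
    field_simp
    ring
  have hc2 : detv (K - I) (L - I)
      = ((2*(k:ℝ)+1)/((3*(k:ℝ)+1)^2*(3*(k:ℝ)+2))) * detv (A2 - A1) (A3 - A1) := by
    rw [hIval, hKval, hLval]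
    simp only [divpt, detv, Prod.fst_add, Prod.snd_add, Prod.fst_sub, Prod.snd_sub,
      Prod.smul_fst, Prod.smul_snd, smul_eq_mul, hnr]
    push_cast
    field_simp
    ring
  have hc3 : detv (L - I) (M - I)
      = ((2*(k:ℝ)+1)/((3*(k:ℝ)+1)^2*(3*(k:ℝ)+2))) * detv (A2 - A1) (A3 - A1) := by
    rw [hIval, hLval, hMval]
    simp only [divpt, detv, Prod.fst_add, Prod.snd_add, Prod.fst_sub, Prod.snd_sub,
      Prod.smul_fst, Prod.smul_snd, smul_eq_mul, hnr]
    push_cast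
    field_simp
    ring
  have hc4 : detv (M - I) (N - I)
      = ((k:ℝ)/((3*(k:ℝ)+1)^2*(3*(k:ℝ)+2))) * detv (A2 - A1) (A3 - A1) := by
    rw [hIval, hMval, hNval]
    simp only [divpt, detv, Prod.fst_add, Prod.snd_add, Prod.fst_sub, Prod.snd_sub,
      Prod.smul_fst, Prod.smul_snd, smul_eq_mul, hnr]
    push_cast
    field_simp
    ring
  -- areas
  have ha1 : area3 I J K = ((k:ℝ)/((3*(k:ℝ)+1)^2*(3*(k:ℝ)+2))) * |detv (A2 - A1) (A3 - A1)| / 2 := by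
    rw [area3, hc1, abs_mul, abs_of_nonneg (by positivity : (0:ℝ) ≤ (k:ℝ)/((3*(k:ℝ)+1)^2*(3*(k:ℝ)+2)))]
  have ha2 : area3 I K L = ((2*(k:ℝ)+1)/((3*(k:ℝ)+1)^2*(3*(k:ℝ)+2))) * |detv (A2 - A1) (A3 - A1)| / 2 := by
    rw [area3, hc2, abs_mul, abs_of_nonneg (by positivity : (0:ℝ) ≤ (2*(k:ℝ)+1)/((3*(k:ℝ)+1)^2*(3*(k:ℝ)+2)))]
  have ha3 : area3 I L M = ((2*(k:ℝ)+1)/((3*(k:ℝ)+1)^2*(3*(k:ℝ)+2))) * |detv (A2 - A1) (A3 - A1)| / 2 := by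
    rw [area3, hc3, abs_mul, abs_of_nonneg (by positivity : (0:ℝ) ≤ (2*(k:ℝ)+1)/((3*(k:ℝ)+1)^2*(3*(k:ℝ)+2)))]
  have ha4 : area3 I M N = ((k:ℝ)/((3*(k:ℝ)+1)^2*(3*(k:ℝ)+2))) * |detv (A2 - A1) (A3 - A1)| / 2 := by
    rw [area3, hc4, abs_mul, abs_of_nonneg (by positivity : (0:ℝ) ≤ (k:ℝ)/((3*(k:ℝ)+1)^2*(3*(k:ℝ)+2)))]
  rw [ha1, ha2, ha3, ha4, area3, hnr]
  have h9 : 9*(2*(k:ℝ)+1)^2 - 1 ≠ 0 := by nlinarith [hkpos]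
  field_simp
  rw [eq_div_iff (by nlinarith [hkpos])]
  ring
end

section
/- Let n ≥ 4 be even and A₁, A₂, A₃ affinely independent points in ℝ². Divide each side of the triangle into n equal parts and draw the cevians from each vertex to the 1st and (n−1)-th division points of the opposite side. The central hexagon formed by these six cevians has area 2(n−2)²/((n+1)(2n−1)) times the area of the triangle. -/
lemma detv_smul (u v : ℝ × ℝ) (a b c d : ℝ) :
    detv (a•u + b•v) (c•u + d•v) = (a*d - b*c) * detv u v := by
  simp [detv]
  ring

lemma key {u v : ℝ × ℝ} (h : detv u v ≠ 0) {a b : ℝ}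
    (hab : a•u + b•v = 0) : a = 0 ∧ b = 0 := by
  have h1 := congrArg Prod.fst hab
  have h2 := congrArg Prod.snd hab
  simp [Prod.smul_def, smul_eq_mul] at h1 h2
  simp only [detv] at h
  constructor
  · by_contra ha
    apply h
    have : a * (u.1 * v.2 - u.2 * v.1) = 0 := by linear_combination v.2 * h1 - v.1 * h2
    rcases mul_eq_zero.1 this with h'|h' <;> first | exact absurd h' ha | exact h'
  · by_contra hb
    apply h
    have : b * (u.1 * v.2 - u.2 * v.1) = 0 := by linear_combination u.1 * h2 - u.2 * h1
    rcases mul_eq_zero.1 this with h'|h' <;> first | exact absurd h' hb | exact h'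

lemma hdiv1 (n : ℕ) (hn : 4 ≤ n) (P Q R : ℝ × ℝ) :
    divpt n 1 Q R = P + (((n:ℝ)-1)/n) • (Q - P) + ((1:ℝ)/n) • (R - P) := by
  have hn0 : (n:ℝ) ≠ 0 := by positivity <;> omega
  rw [divpt]
  push_cast
  match_scalars <;> field_simp <;> ring

lemma hdiv2 (n : ℕ) (hn : 4 ≤ n) (P Q : ℝ × ℝ) :
    divpt n (n-1) P Q = P + (((n:ℝ)-1)/n) • (Q - P) := by
  have hn0 : (n:ℝ) ≠ 0 := by
    have : (4:ℝ) ≤ n := by exact_mod_cast hn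
    linarith
  have hc : ((n-1 : ℕ) : ℝ) = (n:ℝ) - 1 := by
    have h1 : 1 ≤ n := by omega
    push_cast [h1]
    ring
  rw [divpt, hc]
  match_scalars <;> field_simp <;> ring

lemma pt1 (n : ℕ) (hn : 4 ≤ n) (P Q R X : ℝ × ℝ)
    (h : detv (Q - P) (R - P) ≠ 0)
    (h1 : X ∈ lineTh P (divpt n 1 Q R))
    (h2 : X ∈ lineTh R (divpt n (n-1) P Q)) :
    X = P + (((n:ℝ)-1)/((n:ℝ)+1)) • (Q - P) + ((1:ℝ)/((n:ℝ)+1)) • (R - P) := by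
  have hn4 : (4:ℝ) ≤ n := by exact_mod_cast hn
  have hn0 : (n:ℝ) ≠ 0 := by linarith
  have hn1 : (n:ℝ) + 1 ≠ 0 := by linarith
  have hnm1 : (n:ℝ) - 1 ≠ 0 := by linarith
  obtain ⟨t, ht⟩ := h1
  obtain ⟨s, hs⟩ := h2
  rw [hdiv1 n hn P Q R] at ht
  rw [hdiv2 n hn P Q] at hs
  set a : ℝ := ((n:ℝ)-1)/n with ha
  set b : ℝ := (1:ℝ)/n with hb
  have hts := ht.symm.trans hs
  have h0 : (t*a - s*a) • (Q - P) + (t*b - (1 - s)) • (R - P) = 0 := by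
    linear_combination (norm := module) hts
  obtain ⟨e1, e2⟩ := key h h0
  have haz : a ≠ 0 := div_ne_zero hnm1 hn0
  have hts' : t = s := mul_right_cancel₀ haz (by linarith)
  subst hts'
  have htv : t = (n:ℝ)/((n:ℝ)+1) := by
    rw [hb] at e2
    rw [eq_div_iff hn1]
    field_simp at e2
    linarith
  rw [ht, htv, ha, hb]
  match_scalars <;> field_simp <;> ring

lemma hdiv1' (n : ℕ) (hn : 4 ≤ n) (P Q : ℝ × ℝ) :
    divpt n 1 Q P = P + (((n:ℝ)-1)/n) • (Q - P) := by
  have hn0 : (n:ℝ) ≠ 0 := by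
    have : (4:ℝ) ≤ n := by exact_mod_cast hn
    linarith
  rw [divpt]
  push_cast
  match_scalars <;> field_simp <;> ring

lemma pt2 (n : ℕ) (hn : 4 ≤ n) (P Q R X : ℝ × ℝ)
    (h : detv (Q - P) (R - P) ≠ 0)
    (h1 : X ∈ lineTh Q (divpt n 1 R P))
    (h2 : X ∈ lineTh R (divpt n (n-1) P Q)) :
    X = P + (((n:ℝ)-1)/(2*(n:ℝ)-1)) • (Q - P) + (((n:ℝ)-1)/(2*(n:ℝ)-1)) • (R - P) := by
  have hn4 : (4:ℝ) ≤ n := by exact_mod_cast hn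
  have hn0 : (n:ℝ) ≠ 0 := by linarith
  have h2n : 2*(n:ℝ) - 1 ≠ 0 := by linarith
  have h2n' : (n:ℝ)*2 - 1 ≠ 0 := by rw [mul_comm]; exact h2n
  have hnm1 : (n:ℝ) - 1 ≠ 0 := by linarith
  obtain ⟨t, ht⟩ := h1
  obtain ⟨s, hs⟩ := h2
  rw [hdiv1' n hn P R] at ht
  rw [hdiv2 n hn P Q] at hs
  set a : ℝ := ((n:ℝ)-1)/n with ha
  have hts := ht.symm.trans hs
  have h0 : (1 - t - s*a) • (Q - P) + (t*a - (1 - s)) • (R - P) = 0 := by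
    linear_combination (norm := module) hts
  obtain ⟨e1, e2⟩ := key h h0
  have hsv : s = 1 - t*a := by linarith
  rw [hsv, ha] at e1
  field_simp at e1
  have htv : t = (n:ℝ)/(2*(n:ℝ)-1) := by
    rw [eq_div_iff h2n]
    linear_combination -e1
  rw [ht, htv, ha]
  match_scalars <;> field_simp <;> ring

lemma detv_cycle (P Q R : ℝ × ℝ) : detv (R - Q) (P - Q) = detv (Q - P) (R - P) := by
  simp [detv]; ring

lemma detv_aux (A e2 e3 : ℝ × ℝ) (a b c d a' b' : ℝ) :
    detv ((A + a•e2 + b•e3) - (A + a'•e2 + b'•e3)) ((A + c•e2 + d•e3) - (A + a'•e2 + b'•e3))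
      = ((a-a')*(d-b') - (b-b')*(c-a')) * detv e2 e3 := by
  have h1 : (A + a•e2 + b•e3) - (A + a'•e2 + b'•e3) = (a-a')•e2 + (b-b')•e3 := by module
  have h2 : (A + c•e2 + d•e3) - (A + a'•e2 + b'•e3) = (c-a')•e2 + (d-b')•e3 := by module
  rw [h1, h2, detv_smul]


/-- For even n ≥ 4, the central hexagon formed by the cevians to the 1st and
(n−1)-th n-division points has area 2(n−2)²/((n+1)(2n−1)) times the triangle. -/
theorem hexagon_even (n : ℕ) (hn : 4 ≤ n) (hne : Even n)
    (A1 A2 A3 : ℝ × ℝ) (hind : detv (A2 - A1) (A3 - A1) ≠ 0)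
    (I J K L M N : ℝ × ℝ)
    (hI : I ∈ lineTh A1 (divpt n 1 A2 A3) ∩ lineTh A3 (divpt n (n - 1) A1 A2))
    (hJ : J ∈ lineTh A2 (divpt n 1 A3 A1) ∩ lineTh A3 (divpt n (n - 1) A1 A2))
    (hK : K ∈ lineTh A2 (divpt n 1 A3 A1) ∩ lineTh A1 (divpt n (n - 1) A2 A3))
    (hL : L ∈ lineTh A3 (divpt n 1 A1 A2) ∩ lineTh A1 (divpt n (n - 1) A2 A3))
    (hM : M ∈ lineTh A2 (divpt n (n - 1) A3 A1) ∩ lineTh A3 (divpt n 1 A1 A2))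
    (hN : N ∈ lineTh A1 (divpt n 1 A2 A3) ∩ lineTh A2 (divpt n (n - 1) A3 A1)) :
    area3 I J K + area3 I K L + area3 I L M + area3 I M N =
      2 * ((n : ℝ) - 2) ^ 2 / (((n : ℝ) + 1) * (2 * n - 1)) * area3 A1 A2 A3 := by
  have hn4 : (4:ℝ) ≤ n := by exact_mod_cast hn
  have hn0 : (n:ℝ) ≠ 0 := by linarith
  have hn1 : (n:ℝ) + 1 ≠ 0 := by linarith
  have h2n : 2*(n:ℝ) - 1 ≠ 0 := by linarith
  have h2n' : (n:ℝ)*2 - 1 ≠ 0 := by rw [mul_comm]; exact h2n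
  have hnm1 : (n:ℝ) - 1 ≠ 0 := by linarith
  have hind2 : detv (A3 - A2) (A1 - A2) ≠ 0 := by rw [detv_cycle]; exact hind
  have hind3 : detv (A1 - A3) (A2 - A3) ≠ 0 := by rw [detv_cycle, detv_cycle]; exact hind
  have hI3 := pt1 n hn A1 A2 A3 I hind hI.1 hI.2
  have hK2 := pt1 n hn A2 A3 A1 K hind2 hK.1 hK.2
  have hM2 := pt1 n hn A3 A1 A2 M hind3 hM.2 hM.1
  have hJ3 := pt2 n hn A1 A2 A3 J hind hJ.1 hJ.2
  have hL2 := pt2 n hn A2 A3 A1 L hind2 hL.1 hL.2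
  have hN2 := pt2 n hn A3 A1 A2 N hind3 hN.1 hN.2
  have hK3 : K = A1 + ((1:ℝ)/((n:ℝ)+1)) • (A2 - A1) + (((n:ℝ)-1)/((n:ℝ)+1)) • (A3 - A1) := by
    rw [hK2]; match_scalars <;> field_simp <;> ring
  have hM3 : M = A1 + ((1:ℝ)/((n:ℝ)+1)) • (A2 - A1) + ((1:ℝ)/((n:ℝ)+1)) • (A3 - A1) := by
    rw [hM2]; match_scalars <;> field_simp <;> ring
  have hL3 : L = A1 + ((1:ℝ)/(2*(n:ℝ)-1)) • (A2 - A1) + (((n:ℝ)-1)/(2*(n:ℝ)-1)) • (A3 - A1) := by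
    rw [hL2]; match_scalars <;> field_simp <;> ring
  have hN3 : N = A1 + (((n:ℝ)-1)/(2*(n:ℝ)-1)) • (A2 - A1) + ((1:ℝ)/(2*(n:ℝ)-1)) • (A3 - A1) := by
    rw [hN2]; match_scalars <;> field_simp <;> ring
  set c1 : ℝ := ((n:ℝ)-2)^2/(((n:ℝ)+1)^2*(2*(n:ℝ)-1)) with hc1
  set c2 : ℝ := (n:ℝ)*((n:ℝ)-2)^2/(((n:ℝ)+1)^2*(2*(n:ℝ)-1)) with hc2
  have hc1pos : (0:ℝ) ≤ c1 := by
    rw [hc1]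
    apply div_nonneg (by positivity)
    have : (0:ℝ) < 2*(n:ℝ)-1 := by linarith
    positivity
  have hc2pos : (0:ℝ) ≤ c2 := by
    rw [hc2]
    apply div_nonneg (by positivity)
    have : (0:ℝ) < 2*(n:ℝ)-1 := by linarith
    positivity
  have d1 : detv (J - I) (K - I) = c1 * detv (A2 - A1) (A3 - A1) := by
    rw [hJ3, hK3, hI3, detv_aux, hc1]
    congr 1
    field_simp
    ring
  have d2 : detv (K - I) (L - I) = c2 * detv (A2 - A1) (A3 - A1) := by
    rw [hK3, hL3, hI3, detv_aux, hc2]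
    congr 1
    field_simp
    ring
  have d3 : detv (L - I) (M - I) = c2 * detv (A2 - A1) (A3 - A1) := by
    rw [hL3, hM3, hI3, detv_aux, hc2]
    congr 1
    field_simp
    ring
  have d4 : detv (M - I) (N - I) = c1 * detv (A2 - A1) (A3 - A1) := by
    rw [hM3, hN3, hI3, detv_aux, hc1]
    congr 1
    field_simp
    ring
  have hsum : c1 + c2 + c2 + c1 = 2 * ((n:ℝ) - 2) ^ 2 / (((n:ℝ) + 1) * (2 * (n:ℝ) - 1)) := by
    rw [hc1, hc2]
    field_simp
    ring
  show |detv (J - I) (K - I)|/2 + |detv (K - I) (L - I)|/2 + |detv (L - I) (M - I)|/2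
      + |detv (M - I) (N - I)|/2 = _ * (|detv (A2 - A1) (A3 - A1)|/2)
  rw [d1, d2, d3, d4, abs_mul, abs_mul, abs_of_nonneg hc1pos, abs_of_nonneg hc2pos]
  linear_combination (|detv (A2 - A1) (A3 - A1)|/2) * hsum
end

section
/- Let ABCD be a parallelogram in ℝ² (i.e., B − A = C − D, with A, B, C affinely independent). For λ > 0, let K divide BC in ratio λ:1, L divide CD in ratio λ:1, M divide DA in ratio λ:1, and N divide AB in ratio λ:1. Then the four cevians AK, BL, CM, DN bound a quadrilateral whose area is 1/(2λ² + 2λ + 1) times the area of ABCD. -/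
set_option maxHeartbeats 1600000


/-- Auxiliary point: A + (p·(B−A) + q·(D−A))/(2l²+2l+1). -/
noncomputable def pt (A B D : ℝ × ℝ) (l p q : ℝ) : ℝ × ℝ :=
  (A.1 + (p * (B.1 - A.1) + q * (D.1 - A.1)) / (2 * l ^ 2 + 2 * l + 1),
   A.2 + (p * (B.2 - A.2) + q * (D.2 - A.2)) / (2 * l ^ 2 + 2 * l + 1))

lemma line_uniq (P Q d1 d2 X X0 : ℝ × ℝ) (h : detv d1 d2 ≠ 0)
    (h1 : ∃ s : ℝ, X = P + s • d1) (h2 : ∃ t : ℝ, X = Q + t • d2)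
    (h3 : ∃ s : ℝ, X0 = P + s • d1) (h4 : ∃ t : ℝ, X0 = Q + t • d2) :
    X = X0 := by
  obtain ⟨s, hs⟩ := h1
  obtain ⟨t, ht⟩ := h2
  obtain ⟨s', hs'⟩ := h3
  obtain ⟨t', ht'⟩ := h4
  have a1 : X.1 = P.1 + s * d1.1 := by rw [hs]; rfl
  have a2 : X.2 = P.2 + s * d1.2 := by rw [hs]; rfl
  have b1 : X.1 = Q.1 + t * d2.1 := by rw [ht]; rfl
  have b2 : X.2 = Q.2 + t * d2.2 := by rw [ht]; rfl
  have a1' : X0.1 = P.1 + s' * d1.1 := by rw [hs']; rfl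
  have a2' : X0.2 = P.2 + s' * d1.2 := by rw [hs']; rfl
  have b1' : X0.1 = Q.1 + t' * d2.1 := by rw [ht']; rfl
  have b2' : X0.2 = Q.2 + t' * d2.2 := by rw [ht']; rfl
  have e1 : (s - s') * d1.1 = (t - t') * d2.1 := by linear_combination a1' - a1 + b1 - b1'
  have e2 : (s - s') * d1.2 = (t - t') * d2.2 := by linear_combination a2' - a2 + b2 - b2'
  have key : (s - s') * detv d1 d2 = 0 := by
    simp only [detv]; linear_combination d2.2 * e1 - d2.1 * e2
  have hss : s = s' := by
    rcases mul_eq_zero.1 key with h' | h'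
    · linarith
    · exact absurd h' h
  rw [hs, hs', hss]

/-- Routh–Steiner for parallelograms with equal division ratios λ:1:
the cevian quadrilateral has area 1/(2λ²+2λ+1) times the parallelogram. -/
theorem parallelogram_equal_ratio (A B C D : ℝ × ℝ)
    (hpar : B - A = C - D) (hind : detv (B - A) (C - A) ≠ 0)
    (l : ℝ) (hl : 0 < l) (K L M N : ℝ × ℝ)
    (hK : K = (1 / (1 + l)) • B + (l / (1 + l)) • C)
    (hL : L = (1 / (1 + l)) • C + (l / (1 + l)) • D)
    (hM : M = (1 / (1 + l)) • D + (l / (1 + l)) • A)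
    (hN : N = (1 / (1 + l)) • A + (l / (1 + l)) • B)
    (X Y Z W : ℝ × ℝ)
    (hX : X ∈ lineTh B L ∩ lineTh C M)
    (hY : Y ∈ lineTh C M ∩ lineTh D N)
    (hZ : Z ∈ lineTh D N ∩ lineTh A K)
    (hW : W ∈ lineTh A K ∩ lineTh B L) :
    area3 X Y Z + area3 Z W X =
      1 / (2 * l ^ 2 + 2 * l + 1) * |detv (B - A) (D - A)| := by
  have hl1 : (1 : ℝ) + l ≠ 0 := by linarith
  have hD0pos : (0 : ℝ) < 2 * l ^ 2 + 2 * l + 1 := by positivity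
  have hD0 : (2 * l ^ 2 + 2 * l + 1 : ℝ) ≠ 0 := ne_of_gt hD0pos
  have hc : C = B + D - A := by
    have h1 : C.1 = B.1 + D.1 - A.1 := by
      have := congrArg Prod.fst hpar; simp [Prod.fst_sub] at this; linarith
    have h2 : C.2 = B.2 + D.2 - A.2 := by
      have := congrArg Prod.snd hpar; simp [Prod.snd_sub] at this; linarith
    exact Prod.ext (by simpa using h1) (by simpa using h2)
  subst hc
  subst hK; subst hL; subst hM; subst hN
  have hd : detv (B - A) (D - A) ≠ 0 := by
    have : detv (B - A) (B + D - A - A) = detv (B - A) (D - A) := by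
      simp [detv]; ring
    rwa [this] at hind
  set d : ℝ := detv (B - A) (D - A) with hd_def
  -- explicit intersection points
  set X0 : ℝ × ℝ := pt A B D l (l ^ 2 + l + 1) ((1 + l) ^ 2) with hX0
  set Y0 : ℝ × ℝ := pt A B D l (l ^ 2) (l ^ 2 + l + 1) with hY0
  set Z0 : ℝ × ℝ := pt A B D l (l ^ 2 + l) (l ^ 2) with hZ0
  set W0 : ℝ × ℝ := pt A B D l ((1 + l) ^ 2) (l ^ 2 + l) with hW0
  obtain ⟨hX1, hX2⟩ := hX
  obtain ⟨hY1, hY2⟩ := hY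
  obtain ⟨hZ1, hZ2⟩ := hZ
  obtain ⟨hW1, hW2⟩ := hW
  simp only [lineTh, Set.mem_setOf_eq] at hX1 hX2 hY1 hY2 hZ1 hZ2 hW1 hW2
  -- direction determinants
  have detBLCM : detv ((1 / (1 + l)) • (B + D - A) + (l / (1 + l)) • D - B)
      ((1 / (1 + l)) • D + (l / (1 + l)) • A - (B + D - A)) =
      ((2 * l ^ 2 + 2 * l + 1) / (1 + l) ^ 2) * d := by
    simp only [hd_def, detv, Prod.fst_add, Prod.snd_add, Prod.fst_sub, Prod.snd_sub,
      Prod.smul_fst, Prod.smul_snd, smul_eq_mul]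
    field_simp
    ring
  have detCMDN : detv ((1 / (1 + l)) • D + (l / (1 + l)) • A - (B + D - A))
      ((1 / (1 + l)) • A + (l / (1 + l)) • B - D) =
      ((2 * l ^ 2 + 2 * l + 1) / (1 + l) ^ 2) * d := by
    simp only [hd_def, detv, Prod.fst_add, Prod.snd_add, Prod.fst_sub, Prod.snd_sub,
      Prod.smul_fst, Prod.smul_snd, smul_eq_mul]
    field_simp
    ring
  have detDNAK : detv ((1 / (1 + l)) • A + (l / (1 + l)) • B - D)
      ((1 / (1 + l)) • B + (l / (1 + l)) • (B + D - A) - A) =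
      ((2 * l ^ 2 + 2 * l + 1) / (1 + l) ^ 2) * d := by
    simp only [hd_def, detv, Prod.fst_add, Prod.snd_add, Prod.fst_sub, Prod.snd_sub,
      Prod.smul_fst, Prod.smul_snd, smul_eq_mul]
    field_simp
    ring
  have detAKBL : detv ((1 / (1 + l)) • B + (l / (1 + l)) • (B + D - A) - A)
      ((1 / (1 + l)) • (B + D - A) + (l / (1 + l)) • D - B) =
      ((2 * l ^ 2 + 2 * l + 1) / (1 + l) ^ 2) * d := by
    simp only [hd_def, detv, Prod.fst_add, Prod.snd_add, Prod.fst_sub, Prod.snd_sub,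
      Prod.smul_fst, Prod.smul_snd, smul_eq_mul]
    field_simp
    ring
  have hne : ((2 * l ^ 2 + 2 * l + 1) / (1 + l) ^ 2) * d ≠ 0 :=
    mul_ne_zero (div_ne_zero hD0 (pow_ne_zero 2 hl1)) hd
  -- memberships of explicit points
  have mX1 : ∃ s : ℝ, X0 = B + s • ((1 / (1 + l)) • (B + D - A) + (l / (1 + l)) • D - B) := by
    refine ⟨(1 + l) ^ 2 / (2 * l ^ 2 + 2 * l + 1), Prod.ext ?_ ?_⟩ <;>
    · simp only [hX0, pt, Prod.fst_add, Prod.snd_add, Prod.fst_sub, Prod.snd_sub,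
        Prod.smul_fst, Prod.smul_snd, smul_eq_mul]
      field_simp
      ring
  have mX2 : ∃ t : ℝ, X0 = (B + D - A) + t • ((1 / (1 + l)) • D + (l / (1 + l)) • A - (B + D - A)) := by
    refine ⟨l * (1 + l) / (2 * l ^ 2 + 2 * l + 1), Prod.ext ?_ ?_⟩ <;>
    · simp only [hX0, pt, Prod.fst_add, Prod.snd_add, Prod.fst_sub, Prod.snd_sub,
        Prod.smul_fst, Prod.smul_snd, smul_eq_mul]
      field_simp
      ring
  have mY1 : ∃ t : ℝ, Y0 = (B + D - A) + t • ((1 / (1 + l)) • D + (l / (1 + l)) • A - (B + D - A)) := by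
    refine ⟨(1 + l) ^ 2 / (2 * l ^ 2 + 2 * l + 1), Prod.ext ?_ ?_⟩ <;>
    · simp only [hY0, pt, Prod.fst_add, Prod.snd_add, Prod.fst_sub, Prod.snd_sub,
        Prod.smul_fst, Prod.smul_snd, smul_eq_mul]
      field_simp
      ring
  have mY2 : ∃ t : ℝ, Y0 = D + t • ((1 / (1 + l)) • A + (l / (1 + l)) • B - D) := by
    refine ⟨l * (1 + l) / (2 * l ^ 2 + 2 * l + 1), Prod.ext ?_ ?_⟩ <;>
    · simp only [hY0, pt, Prod.fst_add, Prod.snd_add, Prod.fst_sub, Prod.snd_sub,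
        Prod.smul_fst, Prod.smul_snd, smul_eq_mul]
      field_simp
      ring
  have mZ1 : ∃ t : ℝ, Z0 = D + t • ((1 / (1 + l)) • A + (l / (1 + l)) • B - D) := by
    refine ⟨(1 + l) ^ 2 / (2 * l ^ 2 + 2 * l + 1), Prod.ext ?_ ?_⟩ <;>
    · simp only [hZ0, pt, Prod.fst_add, Prod.snd_add, Prod.fst_sub, Prod.snd_sub,
        Prod.smul_fst, Prod.smul_snd, smul_eq_mul]
      field_simp
      ring
  have mZ2 : ∃ t : ℝ, Z0 = A + t • ((1 / (1 + l)) • B + (l / (1 + l)) • (B + D - A) - A) := by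
    refine ⟨l * (1 + l) / (2 * l ^ 2 + 2 * l + 1), Prod.ext ?_ ?_⟩ <;>
    · simp only [hZ0, pt, Prod.fst_add, Prod.snd_add, Prod.fst_sub, Prod.snd_sub,
        Prod.smul_fst, Prod.smul_snd, smul_eq_mul]
      field_simp
      ring
  have mW1 : ∃ t : ℝ, W0 = A + t • ((1 / (1 + l)) • B + (l / (1 + l)) • (B + D - A) - A) := by
    refine ⟨(1 + l) ^ 2 / (2 * l ^ 2 + 2 * l + 1), Prod.ext ?_ ?_⟩ <;>
    · simp only [hW0, pt, Prod.fst_add, Prod.snd_add, Prod.fst_sub, Prod.snd_sub,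
        Prod.smul_fst, Prod.smul_snd, smul_eq_mul]
      field_simp
      ring
  have mW2 : ∃ s : ℝ, W0 = B + s • ((1 / (1 + l)) • (B + D - A) + (l / (1 + l)) • D - B) := by
    refine ⟨l * (1 + l) / (2 * l ^ 2 + 2 * l + 1), Prod.ext ?_ ?_⟩ <;>
    · simp only [hW0, pt, Prod.fst_add, Prod.snd_add, Prod.fst_sub, Prod.snd_sub,
        Prod.smul_fst, Prod.smul_snd, smul_eq_mul]
      field_simp
      ring
  have hXX : X = X0 := line_uniq _ _ _ _ _ _ (detBLCM ▸ hne) hX1 hX2 mX1 mX2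
  have hYY : Y = Y0 := line_uniq _ _ _ _ _ _ (detCMDN ▸ hne) hY1 hY2 mY1 mY2
  have hZZ : Z = Z0 := line_uniq _ _ _ _ _ _ (detDNAK ▸ hne) hZ1 hZ2 mZ1 mZ2
  have hWW : W = W0 := line_uniq _ _ _ _ _ _ (detAKBL ▸ hne) hW1 hW2 mW1 mW2
  subst hXX; subst hYY; subst hZZ; subst hWW
  have h1 : detv (Y0 - X0) (Z0 - X0) = (1 / (2 * l ^ 2 + 2 * l + 1)) * d := by
    simp only [hd_def, hX0, hY0, hZ0, pt, detv, Prod.fst_sub, Prod.snd_sub]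
    field_simp
    ring
  have h2 : detv (W0 - Z0) (X0 - Z0) = (1 / (2 * l ^ 2 + 2 * l + 1)) * d := by
    simp only [hd_def, hX0, hZ0, hW0, pt, detv, Prod.fst_sub, Prod.snd_sub]
    field_simp
    ring
  simp only [area3, h1, h2]
  rw [abs_mul, abs_of_pos (by positivity : (0:ℝ) < 1 / (2 * l ^ 2 + 2 * l + 1))]
  ring
end

section
/- Let ABCD be a parallelogram in ℝ² and κ, λ, μ, ν > 0. Let K = (B+κC)/(1+κ) on BC, L = (C+λD)/(1+λ) on CD, M = (D+μA)/(1+μ) on DA, N = (A+νB)/(1+ν) on AB. Then the quadrilateral with vertices X = BL∩CM, Y = CM∩DN, Z = DN∩AK, W = AK∩BL has area equal to (1/2)·[(μ/(1+ν) + (1+μ)/λ)(1 + κ/(1+μ) + (κ+1)/(ν(1+μ))) / ((2 + 1/λ − 1/(1+μ))(1 + μ + νμ/(1+ν))(1 + 2κ + (κ+1)/ν)) + ((κ+1)/ν + κ/(1+λ))(1 + 1/λ + κ/(1+μ)) / ((2 + 1/λ − 1/(1+μ))(1 + κ + λκ/(1+λ))(1 + 2κ + (κ+1)/ν))] times the area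 of ABCD. -/
lemma detv_comb (p q : ℝ × ℝ) (a b c d : ℝ) :
    detv (a • p + b • q) (c • p + d • q) = (a * d - b * c) * detv p q := by
  simp only [detv, Prod.fst_add, Prod.snd_add, Prod.smul_fst, Prod.smul_snd, smul_eq_mul]
  ring

lemma param_eq (P Q R S Xp : ℝ × ℝ) (t s : ℝ)
    (h1 : Xp = P + t • (Q - P)) (h2 : Xp = R + s • (S - R)) :
    t * detv (Q - P) (S - R) = detv (R - P) (S - R) := by
  have E := h1.symm.trans h2
  have E1 : P.1 + t * (Q.1 - P.1) = R.1 + s * (S.1 - R.1) := by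
    have := congrArg Prod.fst E
    simpa [Prod.fst_add, Prod.smul_fst, Prod.fst_sub, smul_eq_mul] using this
  have E2 : P.2 + t * (Q.2 - P.2) = R.2 + s * (S.2 - R.2) := by
    have := congrArg Prod.snd E
    simpa [Prod.snd_add, Prod.smul_snd, Prod.snd_sub, smul_eq_mul] using this
  simp only [detv, Prod.fst_sub, Prod.snd_sub]
  linear_combination (S.2 - R.2) * E1 - (S.1 - R.1) * E2

set_option maxHeartbeats 1000000 in
lemma coordX (a b d l m : ℝ) (hl : 0 < l) (hm : 0 < m) :
    b + ((1+l)*(1+m)/((1+l)*(1+m)+l*m)) * (1/(1+l)*(b - a + d) + l/(1+l)*d - b)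
      = a + ((1+m+l*m)/((1+l)*(1+m)+l*m))*(b-a) + ((1+l)*(1+m)/((1+l)*(1+m)+l*m))*(d-a) := by
  have h1 : ((1+l)*(1+m)+l*m : ℝ) ≠ 0 := by positivity
  field_simp
  ring

set_option maxHeartbeats 1000000 in
lemma coordY (a b d m n : ℝ) (hm : 0 < m) (hn : 0 < n) :
    b - a + d + ((1+m)*(1+n)/((1+m)*(1+n)+m*n)) * (1/(1+m)*d + m/(1+m)*a - (b - a + d))
      = a + ((m*n)/((1+m)*(1+n)+m*n))*(b-a) + ((1+n+m*n)/((1+m)*(1+n)+m*n))*(d-a) := by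
  have h1 : ((1+m)*(1+n)+m*n : ℝ) ≠ 0 := by positivity
  field_simp
  ring

set_option maxHeartbeats 1000000 in
lemma coordZ (a b d n k : ℝ) (hn : 0 < n) (hk : 0 < k) :
    d + ((1+n)*(1+k)/((1+n)*(1+k)+n*k)) * (1/(1+n)*a + n/(1+n)*b - d)
      = a + ((n*(1+k))/((1+n)*(1+k)+n*k))*(b-a) + ((n*k)/((1+n)*(1+k)+n*k))*(d-a) := by
  have h1 : ((1+n)*(1+k)+n*k : ℝ) ≠ 0 := by positivity
  field_simp
  ring

set_option maxHeartbeats 1000000 in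
lemma coordW (a b d k l : ℝ) (hk : 0 < k) (hl : 0 < l) :
    a + ((1+k)*(1+l)/((1+k)*(1+l)+k*l)) * (1/(1+k)*b + k/(1+k)*(b - a + d) - a)
      = a + ((1+k)*(1+l)/((1+k)*(1+l)+k*l))*(b-a) + ((k*(1+l))/((1+k)*(1+l)+k*l))*(d-a) := by
  have h1 : ((1+k)*(1+l)+k*l : ℝ) ≠ 0 := by positivity
  field_simp
  ring

set_option maxHeartbeats 4000000 in
lemma key1 (k l m n : ℝ) (hk : 0 < k) (hl : 0 < l) (hm : 0 < m) (hn : 0 < n)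
    (hq : (0:ℝ) < 2 + 1 / l - 1 / (1 + m)) :
    ((m*n)/((1+m)*(1+n)+m*n) - (1+m+l*m)/((1+l)*(1+m)+l*m)) *
        ((n*k)/((1+n)*(1+k)+n*k) - (1+l)*(1+m)/((1+l)*(1+m)+l*m)) -
      ((1+n+m*n)/((1+m)*(1+n)+m*n) - (1+l)*(1+m)/((1+l)*(1+m)+l*m)) *
        ((n*(1+k))/((1+n)*(1+k)+n*k) - (1+m+l*m)/((1+l)*(1+m)+l*m)) =
    (m / (1 + n) + (1 + m) / l) * (1 + k / (1 + m) + (k + 1) / (n * (1 + m))) /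
        ((2 + 1 / l - 1 / (1 + m)) * (1 + m + n * m / (1 + n)) *
          (1 + 2 * k + (k + 1) / n)) := by
  have h1 : ((1+m)*(1+n)+m*n : ℝ) ≠ 0 := by positivity
  have h2 : ((1+l)*(1+m)+l*m : ℝ) ≠ 0 := by positivity
  have h3 : ((1+n)*(1+k)+n*k : ℝ) ≠ 0 := by positivity
  have h5 : (1 + m + n * m / (1 + n) : ℝ) ≠ 0 := by positivity
  have h6 : (1 + 2 * k + (k + 1) / n : ℝ) ≠ 0 := by positivity
  rw [eq_div_iff (mul_ne_zero (mul_ne_zero (ne_of_gt hq) h5) h6)]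
  field_simp
  ring

set_option maxHeartbeats 4000000 in
lemma key2 (k l m n : ℝ) (hk : 0 < k) (hl : 0 < l) (hm : 0 < m) (hn : 0 < n)
    (hq : (0:ℝ) < 2 + 1 / l - 1 / (1 + m)) :
    ((1+k)*(1+l)/((1+k)*(1+l)+k*l) - (n*(1+k))/((1+n)*(1+k)+n*k)) *
        ((1+l)*(1+m)/((1+l)*(1+m)+l*m) - (n*k)/((1+n)*(1+k)+n*k)) -
      ((k*(1+l))/((1+k)*(1+l)+k*l) - (n*k)/((1+n)*(1+k)+n*k)) *
        ((1+m+l*m)/((1+l)*(1+m)+l*m) - (n*(1+k))/((1+n)*(1+k)+n*k)) =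
    ((k + 1) / n + k / (1 + l)) * (1 + 1 / l + k / (1 + m)) /
        ((2 + 1 / l - 1 / (1 + m)) * (1 + k + l * k / (1 + l)) *
          (1 + 2 * k + (k + 1) / n)) := by
  have h1 : ((1+k)*(1+l)+k*l : ℝ) ≠ 0 := by positivity
  have h2 : ((1+l)*(1+m)+l*m : ℝ) ≠ 0 := by positivity
  have h3 : ((1+n)*(1+k)+n*k : ℝ) ≠ 0 := by positivity
  have h5 : (1 + k + l * k / (1 + l) : ℝ) ≠ 0 := by positivity
  have h6 : (1 + 2 * k + (k + 1) / n : ℝ) ≠ 0 := by positivity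
  rw [eq_div_iff (mul_ne_zero (mul_ne_zero (ne_of_gt hq) h5) h6)]
  field_simp
  ring

set_option maxHeartbeats 2000000 in
/-- Routh–Steiner theorem for parallelograms with arbitrary ratios κ, λ, μ, ν. -/
theorem parallelogram_routh (A B C D : ℝ × ℝ)
    (hpar : B - A = C - D) (hind : detv (B - A) (D - A) ≠ 0)
    (k l m n : ℝ) (hk : 0 < k) (hl : 0 < l) (hm : 0 < m) (hn : 0 < n)
    (K L M N : ℝ × ℝ)
    (hK : K = (1 / (1 + k)) • B + (k / (1 + k)) • C)
    (hL : L = (1 / (1 + l)) • C + (l / (1 + l)) • D)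
    (hM : M = (1 / (1 + m)) • D + (m / (1 + m)) • A)
    (hN : N = (1 / (1 + n)) • A + (n / (1 + n)) • B)
    (X Y Z W : ℝ × ℝ)
    (hX : X ∈ lineTh B L ∩ lineTh C M)
    (hY : Y ∈ lineTh C M ∩ lineTh D N)
    (hZ : Z ∈ lineTh D N ∩ lineTh A K)
    (hW : W ∈ lineTh A K ∩ lineTh B L) :
    area3 X Y Z + area3 Z W X =
      (1 / 2) *
        ((m / (1 + n) + (1 + m) / l) * (1 + k / (1 + m) + (k + 1) / (n * (1 + m))) /
            ((2 + 1 / l - 1 / (1 + m)) * (1 + m + n * m / (1 + n)) *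
              (1 + 2 * k + (k + 1) / n)) +
          ((k + 1) / n + k / (1 + l)) * (1 + 1 / l + k / (1 + m)) /
            ((2 + 1 / l - 1 / (1 + m)) * (1 + k + l * k / (1 + l)) *
              (1 + 2 * k + (k + 1) / n))) *
        |detv (B - A) (D - A)| := by
  have hk1 : (0:ℝ) < 1 + k := by linarith
  have hl1 : (0:ℝ) < 1 + l := by linarith
  have hm1 : (0:ℝ) < 1 + m := by linarith
  have hn1 : (0:ℝ) < 1 + n := by linarith
  have hC : C = B - A + D := by linear_combination -hpar
  subst hC hK hL hM hN
  obtain ⟨⟨t1, ht1⟩, ⟨s1, hs1⟩⟩ := hX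
  obtain ⟨⟨t2, ht2⟩, ⟨s2, hs2⟩⟩ := hY
  obtain ⟨⟨t3, ht3⟩, ⟨s3, hs3⟩⟩ := hZ
  obtain ⟨⟨t4, ht4⟩, ⟨s4, hs4⟩⟩ := hW
  have hpX := param_eq _ _ _ _ _ _ _ ht1 hs1
  have hpY := param_eq _ _ _ _ _ _ _ ht2 hs2
  have hpZ := param_eq _ _ _ _ _ _ _ ht3 hs3
  have hpW := param_eq _ _ _ _ _ _ _ ht4 hs4
  -- denominators
  have hdX : (1+l)*(1+m) * detv ((1 / (1 + l)) • (B - A + D) + (l / (1 + l)) • D - B)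
      ((1 / (1 + m)) • D + (m / (1 + m)) • A - (B - A + D))
      = ((1+l)*(1+m)+l*m) * detv (B - A) (D - A) := by
    simp only [detv, Prod.fst_add, Prod.snd_add, Prod.fst_sub, Prod.snd_sub,
      Prod.smul_fst, Prod.smul_snd, smul_eq_mul]
    field_simp
    ring
  have hdY : (1+m)*(1+n) * detv ((1 / (1 + m)) • D + (m / (1 + m)) • A - (B - A + D))
      ((1 / (1 + n)) • A + (n / (1 + n)) • B - D)
      = ((1+m)*(1+n)+m*n) * detv (B - A) (D - A) := by
    simp only [detv, Prod.fst_add, Prod.snd_add, Prod.fst_sub, Prod.snd_sub,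
      Prod.smul_fst, Prod.smul_snd, smul_eq_mul]
    field_simp
    ring
  have hdZ : (1+n)*(1+k) * detv ((1 / (1 + n)) • A + (n / (1 + n)) • B - D)
      ((1 / (1 + k)) • B + (k / (1 + k)) • (B - A + D) - A)
      = ((1+n)*(1+k)+n*k) * detv (B - A) (D - A) := by
    simp only [detv, Prod.fst_add, Prod.snd_add, Prod.fst_sub, Prod.snd_sub,
      Prod.smul_fst, Prod.smul_snd, smul_eq_mul]
    field_simp
    ring
  have hdW : (1+k)*(1+l) * detv ((1 / (1 + k)) • B + (k / (1 + k)) • (B - A + D) - A)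
      ((1 / (1 + l)) • (B - A + D) + (l / (1 + l)) • D - B)
      = ((1+k)*(1+l)+k*l) * detv (B - A) (D - A) := by
    simp only [detv, Prod.fst_add, Prod.snd_add, Prod.fst_sub, Prod.snd_sub,
      Prod.smul_fst, Prod.smul_snd, smul_eq_mul]
    field_simp
    ring
  -- numerators
  have hnX : detv (B - A + D - B)
      ((1 / (1 + m)) • D + (m / (1 + m)) • A - (B - A + D)) = detv (B - A) (D - A) := by
    simp only [detv, Prod.fst_add, Prod.snd_add, Prod.fst_sub, Prod.snd_sub,
      Prod.smul_fst, Prod.smul_snd, smul_eq_mul]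
    field_simp
    ring
  have hnY : detv (D - (B - A + D))
      ((1 / (1 + n)) • A + (n / (1 + n)) • B - D) = detv (B - A) (D - A) := by
    simp only [detv, Prod.fst_add, Prod.snd_add, Prod.fst_sub, Prod.snd_sub,
      Prod.smul_fst, Prod.smul_snd, smul_eq_mul]
    field_simp
    ring
  have hnZ : detv (A - D)
      ((1 / (1 + k)) • B + (k / (1 + k)) • (B - A + D) - A) = detv (B - A) (D - A) := by
    simp only [detv, Prod.fst_add, Prod.snd_add, Prod.fst_sub, Prod.snd_sub,
      Prod.smul_fst, Prod.smul_snd, smul_eq_mul]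
    field_simp
    ring
  have hnW : detv (B - A)
      ((1 / (1 + l)) • (B - A + D) + (l / (1 + l)) • D - B) = detv (B - A) (D - A) := by
    simp only [detv, Prod.fst_add, Prod.snd_add, Prod.fst_sub, Prod.snd_sub,
      Prod.smul_fst, Prod.smul_snd, smul_eq_mul]
    field_simp
    ring
  -- parameter values
  have ht1v : t1 = (1+l)*(1+m)/((1+l)*(1+m)+l*m) := by
    rw [eq_div_iff (by positivity : ((1+l)*(1+m)+l*m : ℝ) ≠ 0)]
    refine mul_right_cancel₀ hind ?_
    linear_combination ((1+l)*(1+m)) * hpX - t1 * hdX + ((1+l)*(1+m)) * hnX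
  have ht2v : t2 = (1+m)*(1+n)/((1+m)*(1+n)+m*n) := by
    rw [eq_div_iff (by positivity : ((1+m)*(1+n)+m*n : ℝ) ≠ 0)]
    refine mul_right_cancel₀ hind ?_
    linear_combination ((1+m)*(1+n)) * hpY - t2 * hdY + ((1+m)*(1+n)) * hnY
  have ht3v : t3 = (1+n)*(1+k)/((1+n)*(1+k)+n*k) := by
    rw [eq_div_iff (by positivity : ((1+n)*(1+k)+n*k : ℝ) ≠ 0)]
    refine mul_right_cancel₀ hind ?_
    linear_combination ((1+n)*(1+k)) * hpZ - t3 * hdZ + ((1+n)*(1+k)) * hnZ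
  have ht4v : t4 = (1+k)*(1+l)/((1+k)*(1+l)+k*l) := by
    rw [eq_div_iff (by positivity : ((1+k)*(1+l)+k*l : ℝ) ≠ 0)]
    refine mul_right_cancel₀ hind ?_
    linear_combination ((1+k)*(1+l)) * hpW - t4 * hdW + ((1+k)*(1+l)) * hnW
  -- closed forms of the four points
  have hXc : X = A + ((1+m+l*m)/((1+l)*(1+m)+l*m)) • (B - A)
      + ((1+l)*(1+m)/((1+l)*(1+m)+l*m)) • (D - A) := by
    rw [ht1, ht1v]
    refine Prod.ext ?_ ?_
    · simpa only [Prod.fst_add, Prod.fst_sub, Prod.smul_fst, smul_eq_mul] using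
        coordX A.1 B.1 D.1 l m hl hm
    · simpa only [Prod.snd_add, Prod.snd_sub, Prod.smul_snd, smul_eq_mul] using
        coordX A.2 B.2 D.2 l m hl hm
  have hYc : Y = A + ((m*n)/((1+m)*(1+n)+m*n)) • (B - A)
      + ((1+n+m*n)/((1+m)*(1+n)+m*n)) • (D - A) := by
    rw [ht2, ht2v]
    refine Prod.ext ?_ ?_
    · simpa only [Prod.fst_add, Prod.fst_sub, Prod.smul_fst, smul_eq_mul] using
        coordY A.1 B.1 D.1 m n hm hn
    · simpa only [Prod.snd_add, Prod.snd_sub, Prod.smul_snd, smul_eq_mul] using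
        coordY A.2 B.2 D.2 m n hm hn
  have hZc : Z = A + ((n*(1+k))/((1+n)*(1+k)+n*k)) • (B - A)
      + ((n*k)/((1+n)*(1+k)+n*k)) • (D - A) := by
    rw [ht3, ht3v]
    refine Prod.ext ?_ ?_
    · simpa only [Prod.fst_add, Prod.fst_sub, Prod.smul_fst, smul_eq_mul] using
        coordZ A.1 B.1 D.1 n k hn hk
    · simpa only [Prod.snd_add, Prod.snd_sub, Prod.smul_snd, smul_eq_mul] using
        coordZ A.2 B.2 D.2 n k hn hk
  have hWc : W = A + ((1+k)*(1+l)/((1+k)*(1+l)+k*l)) • (B - A)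
      + ((k*(1+l))/((1+k)*(1+l)+k*l)) • (D - A) := by
    rw [ht4, ht4v]
    refine Prod.ext ?_ ?_
    · simpa only [Prod.fst_add, Prod.fst_sub, Prod.smul_fst, smul_eq_mul] using
        coordW A.1 B.1 D.1 k l hk hl
    · simpa only [Prod.snd_add, Prod.snd_sub, Prod.smul_snd, smul_eq_mul] using
        coordW A.2 B.2 D.2 k l hk hl
  -- difference vectors
  have hYX : Y - X = ((m*n)/((1+m)*(1+n)+m*n) - (1+m+l*m)/((1+l)*(1+m)+l*m)) • (B - A)
      + ((1+n+m*n)/((1+m)*(1+n)+m*n) - (1+l)*(1+m)/((1+l)*(1+m)+l*m)) • (D - A) := by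
    rw [hXc, hYc]; module
  have hZX : Z - X = ((n*(1+k))/((1+n)*(1+k)+n*k) - (1+m+l*m)/((1+l)*(1+m)+l*m)) • (B - A)
      + ((n*k)/((1+n)*(1+k)+n*k) - (1+l)*(1+m)/((1+l)*(1+m)+l*m)) • (D - A) := by
    rw [hXc, hZc]; module
  have hWZ : W - Z = ((1+k)*(1+l)/((1+k)*(1+l)+k*l) - (n*(1+k))/((1+n)*(1+k)+n*k)) • (B - A)
      + ((k*(1+l))/((1+k)*(1+l)+k*l) - (n*k)/((1+n)*(1+k)+n*k)) • (D - A) := by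
    rw [hZc, hWc]; module
  have hXZ : X - Z = ((1+m+l*m)/((1+l)*(1+m)+l*m) - (n*(1+k))/((1+n)*(1+k)+n*k)) • (B - A)
      + ((1+l)*(1+m)/((1+l)*(1+m)+l*m) - (n*k)/((1+n)*(1+k)+n*k)) • (D - A) := by
    rw [hXc, hZc]; module
  have hq : (0:ℝ) < 2 + 1 / l - 1 / (1 + m) := by
    have h1 : 1 / (1 + m) < 1 := by rw [div_lt_one hm1]; linarith
    have h2 : 0 < 1 / l := by positivity
    linarith
  have hS1 : detv (Y - X) (Z - X) =
      ((m / (1 + n) + (1 + m) / l) * (1 + k / (1 + m) + (k + 1) / (n * (1 + m))) /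
        ((2 + 1 / l - 1 / (1 + m)) * (1 + m + n * m / (1 + n)) *
          (1 + 2 * k + (k + 1) / n))) * detv (B - A) (D - A) := by
    rw [hYX, hZX, detv_comb, key1 k l m n hk hl hm hn hq]
  have hS2 : detv (W - Z) (X - Z) =
      (((k + 1) / n + k / (1 + l)) * (1 + 1 / l + k / (1 + m)) /
        ((2 + 1 / l - 1 / (1 + m)) * (1 + k + l * k / (1 + l)) *
          (1 + 2 * k + (k + 1) / n))) * detv (B - A) (D - A) := by
    rw [hWZ, hXZ, detv_comb, key2 k l m n hk hl hm hn hq]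
  have hT1 : (0:ℝ) < (m / (1 + n) + (1 + m) / l) * (1 + k / (1 + m) + (k + 1) / (n * (1 + m))) /
      ((2 + 1 / l - 1 / (1 + m)) * (1 + m + n * m / (1 + n)) * (1 + 2 * k + (k + 1) / n)) := by
    apply div_pos (by positivity)
    exact mul_pos (mul_pos hq (by positivity)) (by positivity)
  have hT2 : (0:ℝ) < ((k + 1) / n + k / (1 + l)) * (1 + 1 / l + k / (1 + m)) /
      ((2 + 1 / l - 1 / (1 + m)) * (1 + k + l * k / (1 + l)) * (1 + 2 * k + (k + 1) / n)) := by
    apply div_pos (by positivity)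
    exact mul_pos (mul_pos hq (by positivity)) (by positivity)
  simp only [area3]
  rw [hS1, hS2, abs_mul, abs_mul, abs_of_pos hT1, abs_of_pos hT2]
  ring
end

section
/- Let A, B, C, D be a parallelogram in ℝ² (D = A + C − B) with κ, ν > 0, K = (B + κC)/(1+κ), N = (A + νB)/(1+ν). The lines AK and DN intersect in the unique point Z, and relative to the barycentric reference (C, A, B) (i.e., coordinates (t₁,t₂,t₃) representing t₁C + t₂A + t₃B with t₁+t₂+t₃=1 after normalization), Z has homogeneous coordinates (κ, (1 + κ + κν)/ν, 1). -/
/-- In a parallelogram ABCD, the lines AK and DN meet in the unique point with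
homogeneous barycentric coordinates (κ, (1+κ+κν)/ν, 1) relative to (C, A, B). -/
theorem parallelogram_AK_DN_intersection (A B C D : ℝ × ℝ)
    (hind : detv (B - A) (C - A) ≠ 0) (hpar : D = A + C - B)
    (k n : ℝ) (hk : 0 < k) (hn : 0 < n) (K N Z : ℝ × ℝ)
    (hK : K = (1 / (1 + k)) • B + (k / (1 + k)) • C)
    (hN : N = (1 / (1 + n)) • A + (n / (1 + n)) • B)
    (hZ : Z = (1 / (k + (1 + k + k * n) / n + 1)) •
        (k • C + ((1 + k + k * n) / n) • A + (1 : ℝ) • B)) :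
    Z ∈ lineTh A K ∩ lineTh D N ∧
      ∀ X ∈ lineTh A K ∩ lineTh D N, X = Z := by
  have hk1 : (1:ℝ) + k ≠ 0 := by positivity
  have hn1 : (1:ℝ) + n ≠ 0 := by positivity
  have hn0 : n ≠ 0 := ne_of_gt hn
  have hSpos : 0 < k + (1 + k + k * n) / n + 1 := by
    have h1 : 0 < (1 + k + k * n) / n := div_pos (by nlinarith) hn
    linarith
  have hS : k + (1 + k + k * n) / n + 1 ≠ 0 := ne_of_gt hSpos
  -- membership on line AK
  have hmemAK : Z = A + ((1 + k) / (k + (1 + k + k * n) / n + 1)) • (K - A) := by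
    subst hZ hK
    simp only [Prod.ext_iff, Prod.fst_add, Prod.snd_add, Prod.fst_sub, Prod.snd_sub,
      Prod.smul_fst, Prod.smul_snd, smul_eq_mul]
    constructor <;> (field_simp; ring)
  have hmemDN : Z = D + ((1 + k) * (1 + n) / (n * (k + (1 + k + k * n) / n + 1))) • (N - D) := by
    subst hZ hN hpar
    simp only [Prod.ext_iff, Prod.fst_add, Prod.snd_add, Prod.fst_sub, Prod.snd_sub,
      Prod.smul_fst, Prod.smul_snd, smul_eq_mul]
    constructor <;> (field_simp; ring)
  have hKN : detv (K - A) (N - D) ≠ 0 := by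
    have hval : detv (K - A) (N - D)
        = -((1 + k + n + 2 * k * n) / ((1 + k) * (1 + n))) * detv (B - A) (C - A) := by
      subst hK hN hpar
      simp only [detv, Prod.fst_add, Prod.snd_add, Prod.fst_sub, Prod.snd_sub,
        Prod.smul_fst, Prod.smul_snd, smul_eq_mul]
      field_simp
      ring
    rw [hval]
    have hc : (0:ℝ) < (1 + k + n + 2 * k * n) / ((1 + k) * (1 + n)) := by
      apply div_pos (by nlinarith) (by nlinarith)
    exact mul_ne_zero (by linarith) hind
  refine ⟨⟨⟨_, hmemAK⟩, ⟨_, hmemDN⟩⟩, ?_⟩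
  rintro X ⟨⟨t, ht⟩, ⟨s, hs⟩⟩
  -- X - Z along both directions
  have h1 : X - Z = (t - (1 + k) / (k + (1 + k + k * n) / n + 1)) • (K - A) := by
    rw [ht, hmemAK, sub_smul]
    abel
  have h2 : X - Z = (s - (1 + k) * (1 + n) / (n * (k + (1 + k + k * n) / n + 1))) • (N - D) := by
    rw [hs, hmemDN, sub_smul]
    abel
  have hdet1 : detv (X - Z) (N - D)
      = (t - (1 + k) / (k + (1 + k + k * n) / n + 1)) * detv (K - A) (N - D) := by
    rw [h1]; simp [detv]; ring
  have hdet2 : detv (X - Z) (N - D) = 0 := by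
    rw [h2]; simp [detv]; ring
  have ht0 : t = (1 + k) / (k + (1 + k + k * n) / n + 1) := by
    have := hdet2 ▸ hdet1
    have h := (mul_eq_zero.mp this.symm).resolve_right hKN
    linarith [sub_eq_zero.mp h]
  rw [ht, ht0, ← hmemAK]
end
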